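/- arXiv:2310.19169 — 4 statements merged into one kernel-verified Lean document; each statement's English description precedes it below -/
import Mathlib

section
/- Let G be a finite simple graph on n vertices with at least one edge that is both vertex-transitive and edge-transitive, and let Ḡ be its complement. Then θ'(Ḡ) = θ(Ḡ) = 1 − λ₁(G)/λ_n(G). -/
open scoped Classical

noncomputable def lovaszTheta {V : Type*} [Fintype V] (G : SimpleGraph V) : ℝ :=
  sSup { x : ℝ | ∃ B : Matrix V V ℝ, B.PosSemidef ∧ B.trace = 1 ∧
    (∀ i j, G.Adj i j → B i j = 0) ∧ x = ∑ i, ∑ j, B i j }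

noncomputable def schrijverTheta {V : Type*} [Fintype V] (G : SimpleGraph V) : ℝ :=
  sSup { x : ℝ | ∃ B : Matrix V V ℝ, B.PosSemidef ∧ B.trace = 1 ∧
    (∀ i j, G.Adj i j → B i j = 0) ∧ (∀ i j, 0 ≤ B i j) ∧ x = ∑ i, ∑ j, B i j }

noncomputable def nbhd {V : Type*} [Fintype V] (G : SimpleGraph V) (v : V) : Finset V :=
  Finset.univ.filter fun w => G.Adj v w

def VertexTransitive {V : Type*} (G : SimpleGraph V) : Prop :=
  ∀ u v : V, ∃ φ : G ≃g G, φ u = v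

def EdgeTransitive {V : Type*} (G : SimpleGraph V) : Prop :=
  ∀ e₁ ∈ G.edgeSet, ∀ e₂ ∈ G.edgeSet, ∃ φ : G ≃g G, Sym2.map φ e₁ = e₂

noncomputable def adjM {V : Type*} [Fintype V] (G : SimpleGraph V) : Matrix V V ℝ :=
  Matrix.of fun i j => if G.Adj i j then (1 : ℝ) else 0

noncomputable def degM {V : Type*} [Fintype V] (G : SimpleGraph V) : Matrix V V ℝ :=
  Matrix.diagonal fun v => ((nbhd G v).card : ℝ)

noncomputable def lapM {V : Type*} [Fintype V] (G : SimpleGraph V) : Matrix V V ℝ :=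
  degM G - adjM G

noncomputable def signlessLapM {V : Type*} [Fintype V] (G : SimpleGraph V) : Matrix V V ℝ :=
  degM G + adjM G

noncomputable def normLapM {V : Type*} [Fintype V] (G : SimpleGraph V) : Matrix V V ℝ :=
  1 - (Matrix.diagonal fun v => 1 / Real.sqrt ((nbhd G v).card)) * adjM G *
      (Matrix.diagonal fun v => 1 / Real.sqrt ((nbhd G v).card))

/-- The `k`-th largest eigenvalue (1-indexed, counted with multiplicity) of the
adjacency matrix of `G`, obtained from the multiset of real roots of its
characteristic polynomial sorted in nonincreasing order. -/
noncomputable def adjEig {V : Type*} [Fintype V] [DecidableEq V]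
    (G : SimpleGraph V) (k : ℕ) : ℝ :=
  ((((adjM G).charpoly.roots).sort (· ≤ ·)).reverse).getD (k - 1) 0

open Matrix Polynomial in
lemma charpoly_conj_unitary {V : Type*} [Fintype V] [DecidableEq V]
    (U A : Matrix V V ℝ) (hU : U ∈ Matrix.unitaryGroup V ℝ) :
    (U * A * star U).charpoly = A.charpoly := by
  have h1 : U * star U = 1 := Matrix.mem_unitaryGroup_iff.mp hU
  set f : Matrix V V ℝ →+* Matrix V V ℝ[X] := (Polynomial.C : ℝ →+* ℝ[X]).mapMatrix with hf
  have key : charmatrix (U * A * star U) = f U * charmatrix A * f (star U) := by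
    rw [charmatrix, charmatrix, mul_sub, sub_mul]
    congr 1
    · rw [← (scalar_commute (X : ℝ[X]) (fun r' => Commute.all _ _) (f U)).eq,
        mul_assoc, ← _root_.map_mul f, h1, _root_.map_one f, mul_one]
    · rw [← _root_.map_mul f, ← _root_.map_mul f]
  have hdet1 : (f U).det * (f (star U)).det = 1 := by
    rw [← det_mul, ← _root_.map_mul f, h1, _root_.map_one f, det_one]
  unfold Matrix.charpoly
  rw [key, det_mul, det_mul, mul_right_comm, hdet1, one_mul]

open Matrix Polynomial in
lemma charpoly_diagonal_real {V : Type*} [Fintype V] [DecidableEq V] (d : V → ℝ) :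
    (Matrix.diagonal d).charpoly = ∏ i, (X - C (d i)) := by
  unfold Matrix.charpoly
  have : charmatrix (Matrix.diagonal d) = Matrix.diagonal (fun i => (X : ℝ[X]) - C (d i)) := by
    ext i j
    by_cases h : i = j
    · subst h; simp
    · simp [h, Matrix.diagonal_apply_ne _ h]
  rw [this, det_diagonal]

open Matrix Polynomial in
lemma hermitian_roots_charpoly {V : Type*} [Fintype V] [DecidableEq V]
    {A : Matrix V V ℝ} (hA : A.IsHermitian) :
    A.charpoly.roots = Finset.univ.val.map hA.eigenvalues := by
  have hsp := hA.spectral_theorem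
  have hD : Matrix.diagonal (RCLike.ofReal ∘ hA.eigenvalues) = Matrix.diagonal hA.eigenvalues := by
    congr 1
  have h1 : A.charpoly = (Matrix.diagonal hA.eigenvalues).charpoly := by
    conv_lhs => rw [hsp, hD]
    exact charpoly_conj_unitary _ _ (hA.eigenvectorUnitary).2
  rw [h1, charpoly_diagonal_real]
  have : (∏ i, ((X : ℝ[X]) - C (hA.eigenvalues i)))
      = ((Finset.univ.val.map hA.eigenvalues).map (fun a => X - C a)).prod := by
    rw [Multiset.map_map]
    rfl
  rw [this, Polynomial.roots_multiset_prod_X_sub_C]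

lemma sort_reverse_getD_mem (s : Multiset ℝ) (k : ℕ) (hk : k < Multiset.card s) :
    ((s.sort (· ≤ ·)).reverse).getD k 0 ∈ s := by
  have hlen : (s.sort (· ≤ ·)).reverse.length = Multiset.card s := by
    simp [Multiset.length_sort]
  rw [List.getD_eq_getElem _ _ (by omega)]
  have hmem : ((s.sort (· ≤ ·)).reverse)[k]'(by omega) ∈ (s.sort (· ≤ ·)).reverse :=
    List.getElem_mem _
  rw [List.mem_reverse, Multiset.mem_sort] at hmem
  exact hmem

lemma sort_reverse_getD_zero_max (s : Multiset ℝ) (x : ℝ) (hx : x ∈ s) :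
    x ≤ ((s.sort (· ≤ ·)).reverse).getD 0 0 := by
  have hs : 0 < Multiset.card s := Multiset.card_pos.mpr (by rintro rfl; simp at hx)
  have hlen : (s.sort (· ≤ ·)).length = Multiset.card s := Multiset.length_sort _
  have hsorted : (s.sort (· ≤ ·)).Pairwise (· ≤ ·) := Multiset.pairwise_sort s _
  rw [← Multiset.mem_sort (· ≤ ·), List.mem_iff_getElem] at hx
  obtain ⟨i, hi, rfl⟩ := hx
  rw [List.getD_eq_getElem _ _ (by simp [hlen]; omega), List.getElem_reverse]
  have := hsorted.rel_get_of_le (a := ⟨i, hi⟩)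
    (b := ⟨(s.sort (· ≤ ·)).length - 1 - 0, by omega⟩) (by simp only [Fin.mk_le_mk]; omega)
  simpa using this

lemma sort_reverse_getD_last_min (s : Multiset ℝ) (x : ℝ) (hx : x ∈ s) :
    ((s.sort (· ≤ ·)).reverse).getD (Multiset.card s - 1) 0 ≤ x := by
  have hs : 0 < Multiset.card s := Multiset.card_pos.mpr (by rintro rfl; simp at hx)
  have hlen : (s.sort (· ≤ ·)).length = Multiset.card s := Multiset.length_sort _
  have hsorted : (s.sort (· ≤ ·)).Pairwise (· ≤ ·) := Multiset.pairwise_sort s _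
  rw [← Multiset.mem_sort (· ≤ ·), List.mem_iff_getElem] at hx
  obtain ⟨i, hi, rfl⟩ := hx
  rw [List.getD_eq_getElem _ _ (by simp [hlen]; omega), List.getElem_reverse]
  have := hsorted.rel_get_of_le
    (a := ⟨(s.sort (· ≤ ·)).length - 1 - (Multiset.card s - 1), by omega⟩)
    (b := ⟨i, hi⟩) (by simp only [Fin.mk_le_mk]; omega)
  simpa using this


section Graph
variable {V : Type*} [Fintype V] [DecidableEq V] (G : SimpleGraph V)

lemma adjM_isHermitian : (adjM G).IsHermitian := by
  ext i j
  simp only [Matrix.conjTranspose_apply, adjM, Matrix.of_apply, star_trivial]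
  rw [SimpleGraph.adj_comm]

lemma adjM_rowsum (i : V) : ∑ j, adjM G i j = ((nbhd G i).card : ℝ) := by
  simp only [adjM, Matrix.of_apply]
  rw [Finset.sum_boole]
  simp [nbhd]

lemma nbhd_card_eq (hvt : VertexTransitive G) (u v : V) :
    (nbhd G u).card = (nbhd G v).card := by
  obtain ⟨φ, hφ⟩ := hvt u v
  have : nbhd G v = (nbhd G u).image φ := by
    ext w
    simp only [nbhd, Finset.mem_image, Finset.mem_filter, Finset.mem_univ, true_and]
    constructor
    · intro h
      exact ⟨φ.symm w, by rw [← hφ] at h; simpa using (φ.symm.map_adj_iff).mpr h, by simp⟩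
    · rintro ⟨a, ha, rfl⟩
      rw [← hφ]
      exact φ.map_adj_iff.mpr ha
  rw [this, Finset.card_image_of_injective _ φ.injective]

end Graph

lemma PosSemidef.sum' {V ι : Type*} [Fintype V] (s : Finset ι) (f : ι → Matrix V V ℝ)
    (h : ∀ i ∈ s, (f i).PosSemidef) : (∑ i ∈ s, f i).PosSemidef := by
  classical
  induction s using Finset.induction_on with
  | empty => simpa using Matrix.PosSemidef.zero
  | insert _ _ hx ih =>
    rw [Finset.sum_insert hx]
    exact (h _ (Finset.mem_insert_self _ _)).add
      (ih fun i hi => h i (Finset.mem_insert_of_mem hi))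

lemma PosSemidef.smul' {V : Type*} [Fintype V] {M : Matrix V V ℝ} (hM : M.PosSemidef)
    {a : ℝ} (ha : 0 ≤ a) : (a • M).PosSemidef := by
  constructor
  · unfold Matrix.IsHermitian
    rw [Matrix.conjTranspose_smul, hM.1]
    congr 1
  · exact (hM.smul ha).2


section Main
open Matrix
variable {V : Type*} [Fintype V] [DecidableEq V] (G : SimpleGraph V)

-- spectral facts
lemma spectral_facts (n : ℕ) (hn : Fintype.card V = n) (hedge : ∃ u v, G.Adj u v)
    (hvt : VertexTransitive G) :
    (∀ v : V, ((nbhd G v).card : ℝ) = adjEig G 1) ∧ adjEig G n < 0 ∧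
    (∃ w : V → ℝ, adjM G *ᵥ w = adjEig G n • w ∧ 0 < w ⬝ᵥ w) ∧
    (∀ i, (adjM_isHermitian G).eigenvalues i ≥ adjEig G n) := by
  obtain ⟨u₀, v₀, huv⟩ := hedge
  set A := adjM G with hAdef
  have hA := adjM_isHermitian G
  set d : ℝ := ((nbhd G u₀).card : ℝ) with hd
  have hreg : ∀ v : V, ((nbhd G v).card : ℝ) = d := fun v => by
    rw [hd]; exact congrArg (fun k : ℕ => (k:ℝ)) (nbhd_card_eq G hvt v u₀)
  have hrow : ∀ i, ∑ j, A i j = d := fun i => by rw [adjM_rowsum, hreg]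
  have hd1 : (1 : ℝ) ≤ d := by
    have : v₀ ∈ nbhd G u₀ := by simp [nbhd, huv]
    have h1 : 1 ≤ (nbhd G u₀).card := Finset.card_pos.mpr ⟨v₀, this⟩
    rw [hd]
    exact_mod_cast h1
  have hn0 : 0 < n := by rw [← hn]; exact Fintype.card_pos_iff.mpr ⟨u₀⟩
  have hroots := hermitian_roots_charpoly hA
  have hcard : Multiset.card A.charpoly.roots = n := by
    rw [hroots, Multiset.card_map]; simpa using hn
  -- each eigenvalue has an eigenvector
  have hbnz : ∀ i : V, (⇑(hA.eigenvectorBasis i) : V → ℝ) ≠ 0 := by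
    intro i h
    have h0 : hA.eigenvectorBasis i = 0 := by
      ext k; exact congrFun h k
    have := hA.eigenvectorBasis.orthonormal.1 i
    rw [h0] at this; simp at this
  have heig : ∀ i : V, Module.End.HasEigenvalue (Matrix.toLin' A) (hA.eigenvalues i) := by
    intro i
    apply Module.End.hasEigenvalue_of_hasEigenvector (x := ⇑(hA.eigenvectorBasis i))
    refine ⟨Module.End.mem_eigenspace_iff.mpr ?_, hbnz i⟩
    rw [Matrix.toLin'_apply]
    exact hA.mulVec_eigenvectorBasis i
  -- all eigenvalues ≤ d (Gershgorin)
  have hAdiag : ∀ k : V, A k k = 0 := fun k => by simp [hAdef, adjM]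
  have hAnn : ∀ k j : V, 0 ≤ A k j := fun k j => by
    simp only [hAdef, adjM, Matrix.of_apply]; positivity
  have hev_le : ∀ i : V, hA.eigenvalues i ≤ d := by
    intro i
    obtain ⟨k, hk⟩ := eigenvalue_mem_ball (heig i)
    rw [Metric.mem_closedBall, Real.dist_eq, hAdiag k, sub_zero] at hk
    have hsum : ∑ j ∈ Finset.univ.erase k, ‖A k j‖ = d := by
      have : ∀ j, ‖A k j‖ = A k j := fun j => Real.norm_of_nonneg (hAnn k j)
      simp only [this]
      rw [Finset.sum_erase (h := by rw [hAdiag])]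
      exact hrow k
    calc hA.eigenvalues i ≤ |hA.eigenvalues i| := le_abs_self _
      _ ≤ d := hsum ▸ hk
  -- d is a root of the charpoly
  have hone : A *ᵥ (fun _ => (1 : ℝ)) = d • (fun _ => (1 : ℝ)) := by
    funext i
    simp only [Matrix.mulVec, dotProduct, mul_one, Pi.smul_apply, smul_eq_mul]
    rw [hrow i]
  have hdet : (Matrix.scalar V d - A).det = 0 := by
    rw [← Matrix.exists_mulVec_eq_zero_iff]
    refine ⟨fun _ => (1 : ℝ), ?_, ?_⟩
    · intro h; exact one_ne_zero (congrFun h u₀)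
    · rw [Matrix.sub_mulVec, hone]
      funext i
      simp [Matrix.scalar, Matrix.mulVec_diagonal]
  have heval : A.charpoly.eval d = 0 := by
    have h1 : A.charpoly.eval d = ((Matrix.charmatrix A).map (Polynomial.evalRingHom d)).det := by
      rw [Matrix.charpoly, ← RingHom.mapMatrix_apply]
      exact RingHom.map_det (Polynomial.evalRingHom d) (Matrix.charmatrix A)
    have h2 : (Matrix.charmatrix A).map (Polynomial.evalRingHom d) = Matrix.scalar V d - A := by
      ext i j
      by_cases h : i = j
      · subst h; simp [Matrix.charmatrix_apply_eq, Matrix.scalar]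
      · simp [Matrix.charmatrix_apply_ne _ _ _ h, Matrix.scalar, Matrix.diagonal_apply_ne _ h]
    rw [h1, h2, hdet]
  have hdroot : d ∈ A.charpoly.roots :=
    (Polynomial.mem_roots (Matrix.charpoly_monic A).ne_zero).mpr heval
  -- the extreme roots
  have hμ1mem : adjEig G 1 ∈ A.charpoly.roots := by
    have := sort_reverse_getD_mem A.charpoly.roots 0 (by omega)
    simpa [adjEig] using this
  have hμnmem : adjEig G n ∈ A.charpoly.roots := by
    have := sort_reverse_getD_mem A.charpoly.roots (n - 1) (by omega)
    simpa [adjEig, hcard] using this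
  have hμ1max : ∀ x ∈ A.charpoly.roots, x ≤ adjEig G 1 := by
    intro x hx
    have := sort_reverse_getD_zero_max A.charpoly.roots x hx
    simpa [adjEig] using this
  have hμnmin : ∀ x ∈ A.charpoly.roots, adjEig G n ≤ x := by
    intro x hx
    have := sort_reverse_getD_last_min A.charpoly.roots x hx
    simpa [adjEig, hcard] using this
  have hroot_le : ∀ x ∈ A.charpoly.roots, x ≤ d := by
    intro x hx
    rw [hroots, Multiset.mem_map] at hx
    obtain ⟨i, _, rfl⟩ := hx
    exact hev_le i
  have hμ1 : adjEig G 1 = d := le_antisymm (hroot_le _ hμ1mem) (hμ1max d hdroot)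
  -- trace zero ⇒ min root negative
  have htr : A.charpoly.roots.sum = 0 := by
    rw [hroots]
    have h1 : (Finset.univ.val.map hA.eigenvalues).sum = ∑ i, hA.eigenvalues i := rfl
    rw [h1]
    have h2 : ∑ i, hA.eigenvalues i = Matrix.trace (adjM G) := by
      conv_rhs => rw [hA.spectral_theorem, Unitary.conjStarAlgAut_apply]
      rw [Matrix.trace_mul_cycle]
      have : star ((hA.eigenvectorUnitary : Matrix V V ℝ)) * (hA.eigenvectorUnitary : Matrix V V ℝ) = 1 := by
        exact Matrix.mem_unitaryGroup_iff'.mp hA.eigenvectorUnitary.2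
      rw [this, one_mul, Matrix.trace_diagonal]
      rfl
    rw [h2]
    have : Matrix.trace A = ∑ i, A i i := rfl
    rw [this]
    simp [hAdiag]
  have hμn_neg : adjEig G n < 0 := by
    by_contra h
    push_neg at h
    obtain ⟨t, ht⟩ := Multiset.exists_cons_of_mem hdroot
    have htsum : 0 ≤ t.sum := by
      apply Multiset.sum_nonneg
      intro x hx
      have hxr : x ∈ A.charpoly.roots := by rw [ht]; exact Multiset.mem_cons_of_mem hx
      exact le_trans h (hμnmin x hxr)
    have : A.charpoly.roots.sum = d + t.sum := by rw [ht, Multiset.sum_cons]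
    rw [htr] at this
    nlinarith
  refine ⟨fun v => by rw [hreg, hμ1], hμn_neg, ?_, ?_⟩
  · have : adjEig G n ∈ A.charpoly.roots := hμnmem
    rw [hroots, Multiset.mem_map] at this
    obtain ⟨i₀, _, hi₀⟩ := this
    refine ⟨⇑(hA.eigenvectorBasis i₀), ?_, ?_⟩
    · rw [← hi₀]; exact hA.mulVec_eigenvectorBasis i₀
    · have hne := hbnz i₀
      have : ∃ k, (⇑(hA.eigenvectorBasis i₀) : V → ℝ) k ≠ 0 := by
        by_contra hc; push_neg at hc; exact hne (funext hc)
      obtain ⟨k, hk⟩ := this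
      have : (0:ℝ) < (⇑(hA.eigenvectorBasis i₀) : V → ℝ) k ^ 2 := by positivity
      calc (0:ℝ) < _ := this
        _ ≤ _ := by
          rw [dotProduct]
          rw [show ((⇑(hA.eigenvectorBasis i₀) : V → ℝ) k)^2 = (⇑(hA.eigenvectorBasis i₀) : V → ℝ) k * (⇑(hA.eigenvectorBasis i₀) : V → ℝ) k from sq _]
          exact Finset.single_le_sum (f := fun j => (⇑(hA.eigenvectorBasis i₀) : V → ℝ) j * (⇑(hA.eigenvectorBasis i₀) : V → ℝ) j)
            (fun j _ => mul_self_nonneg _) (Finset.mem_univ k)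
  · intro i
    apply hμnmin
    rw [hroots, Multiset.mem_map]
    exact ⟨i, Finset.mem_univ i, rfl⟩

end Main


open Matrix

theorem stmt15 {V : Type*} [Fintype V] [DecidableEq V] (G : SimpleGraph V) (n : ℕ)
    (hn : Fintype.card V = n) (hedge : ∃ u v, G.Adj u v)
    (hvt : VertexTransitive G) (het : EdgeTransitive G) :
    schrijverTheta Gᶜ = 1 - adjEig G 1 / adjEig G n ∧
    lovaszTheta Gᶜ = 1 - adjEig G 1 / adjEig G n := by
  classical
  obtain ⟨u₀, v₀, huv⟩ := hedge
  obtain ⟨hreg, hμn_neg, ⟨w, hw, hww⟩, hev_ge⟩ :=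
    spectral_facts G n hn ⟨u₀, v₀, huv⟩ hvt
  have hA := adjM_isHermitian G
  set A : Matrix V V ℝ := adjM G with hAdef
  set μ1 : ℝ := adjEig G 1 with hμ1def
  set μn : ℝ := adjEig G n with hμndef
  set m : ℝ := 1 - μ1 / μn with hmdef
  have hn0 : 0 < n := by rw [← hn]; exact Fintype.card_pos_iff.mpr ⟨u₀⟩
  have hnR : (0 : ℝ) < n := by exact_mod_cast hn0
  have hμ1pos : (0 : ℝ) < μ1 := by
    rw [← hreg u₀]
    have : v₀ ∈ nbhd G u₀ := by simp [nbhd, huv]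
    have h1 : 0 < (nbhd G u₀).card := Finset.card_pos.mpr ⟨v₀, this⟩
    exact_mod_cast h1
  have hμn_ne : μn ≠ 0 := ne_of_lt hμn_neg
  set c₀ : ℝ := -(1 / (n * μn)) with hc₀def
  clear_value μ1 μn m c₀
  have hc₀pos : 0 < c₀ := by
    rw [hc₀def]
    have h1 : (n : ℝ) * μn < 0 := mul_neg_of_pos_of_neg hnR hμn_neg
    simpa only [neg_pos] using one_div_neg.mpr h1
  have hc₀μn : c₀ * μn = -(1 / n) := by rw [hc₀def]; field_simp
  -- basic entry facts for A
  have hAdiag : ∀ k : V, A k k = 0 := fun k => by simp [hAdef, adjM]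
  have hAnn : ∀ k j : V, 0 ≤ A k j := fun k j => by
    simp only [hAdef, adjM, Matrix.of_apply]; positivity
  have hrow : ∀ i, ∑ j, A i j = μ1 := fun i => by
    rw [hAdef, adjM_rowsum]; exact hreg i
  have htrA : A.trace = 0 := by
    unfold Matrix.trace; simp [Matrix.diag, hAdiag]
  -- sums and traces of combinations a • 1 + b • A
  have hsum_comb : ∀ a b : ℝ, ∑ i, ∑ j, (a • (1 : Matrix V V ℝ) + b • A) i j
      = a * n + b * (n * μ1) := by
    intro a b
    have hinner : ∀ i, ∑ j, (a • (1 : Matrix V V ℝ) + b • A) i j = a + b * μ1 := by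
      intro i
      simp only [Matrix.add_apply, Matrix.smul_apply, smul_eq_mul]
      rw [Finset.sum_add_distrib, ← Finset.mul_sum, ← Finset.mul_sum, hrow i]
      have h1 : ∑ j, (1 : Matrix V V ℝ) i j = 1 := by
        simp [Matrix.one_apply]
      rw [h1, mul_one]
    simp only [hinner]
    rw [Finset.sum_const, Finset.card_univ, hn, nsmul_eq_mul]
    ring
  have htr_comb : ∀ a b : ℝ, (a • (1 : Matrix V V ℝ) + b • A).trace = a * n := by
    intro a b
    rw [Matrix.trace_add, Matrix.trace_smul, Matrix.trace_smul, htrA, Matrix.trace_one]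
    simp [hn]
  -- the witness matrix B₀
  set B₀ : Matrix V V ℝ := (1 / (n : ℝ)) • (1 : Matrix V V ℝ) + c₀ • A with hB₀def
  have hUU : (hA.eigenvectorUnitary : Matrix V V ℝ) * star (hA.eigenvectorUnitary : Matrix V V ℝ) = 1 :=
    Matrix.mem_unitaryGroup_iff.mp hA.eigenvectorUnitary.2
  have hB₀spec : B₀ = (hA.eigenvectorUnitary : Matrix V V ℝ)
      * Matrix.diagonal (fun i => 1 / (n : ℝ) + c₀ * hA.eigenvalues i)
      * star (hA.eigenvectorUnitary : Matrix V V ℝ) := by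
    have hdd : Matrix.diagonal (fun i => 1 / (n : ℝ) + c₀ * hA.eigenvalues i)
        = (1 / (n : ℝ)) • (1 : Matrix V V ℝ)
          + c₀ • Matrix.diagonal (RCLike.ofReal ∘ hA.eigenvalues) := by
      ext i j
      by_cases h : i = j
      · subst h; simp [Matrix.one_apply, Matrix.diagonal_apply_eq]
      · simp [Matrix.diagonal_apply_ne _ h, Matrix.one_apply_ne h]
    rw [hdd, Matrix.mul_add, Matrix.add_mul, mul_smul_comm, mul_smul_comm,
      smul_mul_assoc, smul_mul_assoc, mul_one, hUU, ← Unitary.conjStarAlgAut_apply (S := ℝ), ← hA.spectral_theorem]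
  have hB₀psd : B₀.PosSemidef := by
    rw [hB₀spec]
    have hdpsd : (Matrix.diagonal (fun i => 1 / (n : ℝ) + c₀ * hA.eigenvalues i)).PosSemidef := by
      refine Matrix.posSemidef_diagonal_iff.mpr fun i => ?_
      have h1 : c₀ * μn ≤ c₀ * hA.eigenvalues i :=
        mul_le_mul_of_nonneg_left (hev_ge i) (le_of_lt hc₀pos)
      rw [hc₀μn] at h1
      linarith
    have := hdpsd.mul_mul_conjTranspose_same (hA.eigenvectorUnitary : Matrix V V ℝ)
    simpa [Matrix.star_eq_conjTranspose] using this
  have hB₀tr : B₀.trace = 1 := by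
    rw [hB₀def, htr_comb]; field_simp
  have hB₀supp : ∀ i j, Gᶜ.Adj i j → B₀ i j = 0 := by
    intro i j hij
    rw [SimpleGraph.compl_adj] at hij
    rw [hB₀def]
    simp only [Matrix.add_apply, Matrix.smul_apply, smul_eq_mul]
    rw [Matrix.one_apply_ne hij.1]
    have : A i j = 0 := by simp [hAdef, adjM, hij.2]
    rw [this]
    ring
  have hB₀nn : ∀ i j, 0 ≤ B₀ i j := by
    intro i j
    rw [hB₀def]
    simp only [Matrix.add_apply, Matrix.smul_apply, smul_eq_mul]
    have h1 : (0:ℝ) ≤ (1 : Matrix V V ℝ) i j := by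
      rw [Matrix.one_apply]; positivity
    have := hAnn i j
    positivity
  have hB₀sum : ∑ i, ∑ j, B₀ i j = m := by
    rw [hB₀def, hsum_comb, hmdef, hc₀def]
    field_simp
    ring
  -- upper bound for the Lovász feasible set
  have hub : ∀ x : ℝ, (∃ B : Matrix V V ℝ, B.PosSemidef ∧ B.trace = 1 ∧
      (∀ i j, Gᶜ.Adj i j → B i j = 0) ∧ x = ∑ i, ∑ j, B i j) → x ≤ m := by
    rintro x ⟨B, hpsd, htr, hsupp, rfl⟩
    haveI : Fintype (G ≃g G) :=
      Fintype.ofInjective (fun φ : G ≃g G => (φ : V → V)) DFunLike.coe_injective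
    have hNpos : 0 < Fintype.card (G ≃g G) :=
      Fintype.card_pos_iff.mpr ⟨⟨Equiv.refl V, Iff.rfl⟩⟩
    set N : ℕ := Fintype.card (G ≃g G) with hNdef
    have hNR : (0 : ℝ) < N := by exact_mod_cast hNpos
    set B' : Matrix V V ℝ := (N : ℝ)⁻¹ • ∑ σ : G ≃g G, B.submatrix ⇑σ ⇑σ with hB'def
    have hB'app : ∀ i j, B' i j = (N : ℝ)⁻¹ * ∑ σ : G ≃g G, B (σ i) (σ j) := by
      intro i j
      rw [hB'def]
      simp [Matrix.sum_apply, Matrix.smul_apply, Matrix.submatrix_apply]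
    -- invariance
    have hinv : ∀ (τ : G ≃g G) (i j : V), B' (τ i) (τ j) = B' i j := by
      intro τ i j
      rw [hB'app, hB'app]
      congr 1
      have h := Equiv.sum_comp
        (⟨fun σ => τ.trans σ, fun σ => τ.symm.trans σ,
          fun σ => by ext x; simp, fun σ => by ext x; simp⟩ : (G ≃g G) ≃ (G ≃g G))
        (fun σ : G ≃g G => B (σ i) (σ j))
      exact h
    have hpsd' : B'.PosSemidef := by
      rw [hB'def]
      exact PosSemidef.smul' (PosSemidef.sum' Finset.univ
        (fun σ : G ≃g G => B.submatrix ⇑σ ⇑σ)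
        (fun σ _ => hpsd.submatrix (⇑σ : V → V))) (by positivity)
    have hB'symm : ∀ a b : V, B' b a = B' a b := by
      intro a b
      have := congrFun (congrFun hpsd'.1 a) b
      simpa [Matrix.conjTranspose_apply] using this
    have htrsub : ∀ σ : G ≃g G, (B.submatrix ⇑σ ⇑σ).trace = B.trace := by
      intro σ
      unfold Matrix.trace
      simp only [Matrix.diag_apply, Matrix.submatrix_apply]
      exact Equiv.sum_comp σ.toEquiv (fun i => B i i)
    have htr' : B'.trace = 1 := by
      rw [hB'def, Matrix.trace_smul, Matrix.trace_sum]
      simp only [htrsub, htr]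
      rw [Finset.sum_const, Finset.card_univ, ← hNdef, nsmul_eq_mul, mul_one, smul_eq_mul,
        inv_mul_cancel₀ (ne_of_gt hNR)]
    have hsum' : ∑ i, ∑ j, B' i j = ∑ i, ∑ j, B i j := by
      have hsumsub : ∀ σ : G ≃g G, ∑ i, ∑ j, B (σ i) (σ j) = ∑ i, ∑ j, B i j := by
        intro σ
        have h1 : ∀ i : V, ∑ j, B (σ i) (σ j) = ∑ j, B (σ i) j := fun i =>
          Equiv.sum_comp σ.toEquiv (fun j => B (σ i) j)
        simp only [h1]
        exact Equiv.sum_comp σ.toEquiv (fun i => ∑ j, B i j)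
      have h2 : ∀ i, ∑ j, B' i j = (N : ℝ)⁻¹ * ∑ σ : G ≃g G, ∑ j, B (σ i) (σ j) := by
        intro i
        simp only [hB'app, ← Finset.mul_sum]
        congr 1
        exact Finset.sum_comm
      simp only [h2, ← Finset.mul_sum]
      rw [Finset.sum_comm]
      simp only [hsumsub]
      rw [Finset.sum_const, Finset.card_univ, ← hNdef, nsmul_eq_mul, ← mul_assoc,
        inv_mul_cancel₀ (ne_of_gt hNR), one_mul]
    have hsupp' : ∀ i j, Gᶜ.Adj i j → B' i j = 0 := by
      intro i j hij
      rw [hB'app]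
      have : ∀ σ : G ≃g G, B (σ i) (σ j) = 0 := by
        intro σ
        apply hsupp
        rw [SimpleGraph.compl_adj] at hij ⊢
        exact ⟨fun he => hij.1 (σ.injective he), fun ha => hij.2 (σ.map_adj_iff.mp ha)⟩
      simp [this]
    -- diagonal entries are all 1/n
    have hdiagc : ∀ v : V, B' v v = B' u₀ u₀ := by
      intro v
      obtain ⟨φ, hφ⟩ := hvt u₀ v
      rw [← hφ]
      exact hinv φ u₀ u₀
    have hdiagval : ∀ v : V, B' v v = 1 / n := by
      have h1 : B'.trace = ∑ v : V, B' v v := rfl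
      intro v
      rw [hdiagc v]
      have h2 : (1 : ℝ) = ∑ v : V, B' v v := by rw [← h1, htr']
      simp only [hdiagc] at h2
      rw [Finset.sum_const, Finset.card_univ, hn, nsmul_eq_mul] at h2
      rw [eq_div_iff (ne_of_gt hnR)]
      linarith [mul_comm (B' u₀ u₀) ((n : ℝ))]
    -- edge entries are all equal
    set c : ℝ := B' u₀ v₀ with hcdef
    have hedgec : ∀ i j, G.Adj i j → B' i j = c := by
      intro i j hij
      obtain ⟨φ, hφ⟩ := het s(i, j) ((SimpleGraph.mem_edgeSet G).mpr hij)
        s(u₀, v₀) ((SimpleGraph.mem_edgeSet G).mpr huv)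
      rw [Sym2.map_pair_eq, Sym2.eq_iff] at hφ
      rcases hφ with ⟨h1, h2⟩ | ⟨h1, h2⟩
      · rw [← hinv φ i j, h1, h2]
      · rw [← hinv φ i j, h1, h2]
        exact hB'symm u₀ v₀
    -- B' is a combination
    have hB'eq : B' = (1 / (n : ℝ)) • (1 : Matrix V V ℝ) + c • A := by
      ext i j
      simp only [Matrix.add_apply, Matrix.smul_apply, smul_eq_mul]
      by_cases hij : i = j
      · subst hij
        rw [Matrix.one_apply_eq, hAdiag, hdiagval]
        ring
      · rw [Matrix.one_apply_ne hij]
        by_cases hadj : G.Adj i j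
        · rw [hedgec i j hadj]
          have : A i j = 1 := by simp [hAdef, adjM, hadj]
          rw [this]; ring
        · rw [hsupp' i j ((SimpleGraph.compl_adj G i j).mpr ⟨hij, hadj⟩)]
          have : A i j = 0 := by simp [hAdef, adjM, hadj]
          rw [this]; ring
    -- PSD at the bottom eigenvector gives c ≤ c₀
    have hc_le : c ≤ c₀ := by
      have hq : 0 ≤ w ⬝ᵥ (B' *ᵥ w) := by
        have := hpsd'.dotProduct_mulVec_nonneg w
        simpa using this
      have hBw : B' *ᵥ w = (1 / (n : ℝ) + c * μn) • w := by
        rw [hB'eq, Matrix.add_mulVec, Matrix.smul_mulVec, Matrix.smul_mulVec,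
          Matrix.one_mulVec, hw]
        funext k
        simp only [Pi.add_apply, Pi.smul_apply, smul_eq_mul]
        ring
      rw [hBw, dotProduct_smul, smul_eq_mul] at hq
      have h1 : 0 ≤ 1 / (n : ℝ) + c * μn := by
        by_contra hcon
        push_neg at hcon
        nlinarith
      have h4 : c₀ * μn ≤ c * μn := by linarith
      exact (mul_le_mul_right_of_neg hμn_neg).mp h4
    -- conclude
    rw [hsum'.symm, hB'eq, hsum_comb]
    have hgoal : (1 / (n : ℝ)) * n + c₀ * (n * μ1) = m := by
      rw [hmdef, hc₀def]
      field_simp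
      ring
    rw [← hgoal]
    have : c * (n * μ1) ≤ c₀ * (n * μ1) :=
      mul_le_mul_of_nonneg_right hc_le (by positivity)
    linarith
  -- wrap up
  have hmemS : m ∈ { x : ℝ | ∃ B : Matrix V V ℝ, B.PosSemidef ∧ B.trace = 1 ∧
      (∀ i j, Gᶜ.Adj i j → B i j = 0) ∧ (∀ i j, 0 ≤ B i j) ∧ x = ∑ i, ∑ j, B i j } :=
    ⟨B₀, hB₀psd, hB₀tr, hB₀supp, hB₀nn, hB₀sum.symm⟩
  have hmemL : m ∈ { x : ℝ | ∃ B : Matrix V V ℝ, B.PosSemidef ∧ B.trace = 1 ∧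
      (∀ i j, Gᶜ.Adj i j → B i j = 0) ∧ x = ∑ i, ∑ j, B i j } :=
    ⟨B₀, hB₀psd, hB₀tr, hB₀supp, hB₀sum.symm⟩
  have hubS : ∀ x ∈ { x : ℝ | ∃ B : Matrix V V ℝ, B.PosSemidef ∧ B.trace = 1 ∧
      (∀ i j, Gᶜ.Adj i j → B i j = 0) ∧ (∀ i j, 0 ≤ B i j) ∧ x = ∑ i, ∑ j, B i j }, x ≤ m := by
    rintro x ⟨B, h1, h2, h3, _, h5⟩
    exact hub x ⟨B, h1, h2, h3, h5⟩
  have hubL : ∀ x ∈ { x : ℝ | ∃ B : Matrix V V ℝ, B.PosSemidef ∧ B.trace = 1 ∧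
      (∀ i j, Gᶜ.Adj i j → B i j = 0) ∧ x = ∑ i, ∑ j, B i j }, x ≤ m := by
    rintro x ⟨B, h1, h2, h3, h5⟩
    exact hub x ⟨B, h1, h2, h3, h5⟩
  constructor
  · unfold schrijverTheta
    exact le_antisymm (csSup_le ⟨m, hmemS⟩ hubS) (le_csSup ⟨m, hubS⟩ hmemS)
  · unfold lovaszTheta
    exact le_antisymm (csSup_le ⟨m, hmemL⟩ hubL) (le_csSup ⟨m, hubL⟩ hmemL)
end

section
/- Let G be a perfect finite simple graph and Ḡ its complement. Then ω(G) = θ'(Ḡ) = θ(Ḡ) = χ(G) = Θ(Ḡ), and α(G) = θ'(G) = θ(G) = Θ(G) = χ(Ḡ). -/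
open scoped Classical

noncomputable def indepNum {V : Type*} [Fintype V] (G : SimpleGraph V) : ℕ :=
  sSup { n : ℕ | ∃ s : Finset V, (∀ i ∈ s, ∀ j ∈ s, i ≠ j → ¬ G.Adj i j) ∧ s.card = n }

noncomputable def cliqueNum {V : Type*} [Fintype V] (G : SimpleGraph V) : ℕ :=
  sSup { n : ℕ | ∃ s : Finset V, (∀ i ∈ s, ∀ j ∈ s, i ≠ j → G.Adj i j) ∧ s.card = n }

def strongProd {α β : Type*} (G : SimpleGraph α) (H : SimpleGraph β) :
    SimpleGraph (α × β) where
  Adj x y := x ≠ y ∧ (x.1 = y.1 ∨ G.Adj x.1 y.1) ∧ (x.2 = y.2 ∨ H.Adj x.2 y.2)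
  symm := by
    constructor
    rintro x y ⟨h0, h1, h2⟩
    exact ⟨h0.symm, h1.imp Eq.symm (fun h => h.symm), h2.imp Eq.symm (fun h => h.symm)⟩
  loopless := by constructor; rintro x ⟨h0, -, -⟩; exact h0 rfl

def strongPow {α : Type*} (G : SimpleGraph α) (k : ℕ) : SimpleGraph (Fin k → α) where
  Adj x y := x ≠ y ∧ ∀ i, x i = y i ∨ G.Adj (x i) (y i)
  symm := by
    constructor
    rintro x y ⟨h0, h1⟩
    exact ⟨h0.symm, fun i => (h1 i).imp Eq.symm (fun h => h.symm)⟩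
  loopless := by constructor; rintro x ⟨h0, -⟩; exact h0 rfl

noncomputable def shannonCapacity {α : Type*} [Fintype α] (G : SimpleGraph α) : ℝ :=
  ⨆ k : ℕ+, (indepNum (strongPow G (k : ℕ)) : ℝ) ^ ((1 : ℝ) / ((k : ℕ) : ℝ))

/-- `G` is perfect: every induced subgraph has chromatic number equal to its
clique number. -/
def IsPerfect {V : Type*} [Fintype V] (G : SimpleGraph V) : Prop :=
  ∀ s : Finset V,
    (G.induce (s : Set V)).chromaticNumber = (cliqueNum (G.induce (s : Set V)) : ℕ∞)



set_option linter.unusedSectionVars false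
set_option linter.unnecessarySeqFocus false
set_option linter.unusedTactic false
set_option maxHeartbeats 1000000

namespace Stmt16Aux

open Finset
open scoped Matrix

variable {V : Type*} [Fintype V]

/-- `s` is an independent set of `G`. -/
def IndOn (G : SimpleGraph V) (s : Finset V) : Prop :=
  ∀ i ∈ s, ∀ j ∈ s, i ≠ j → ¬ G.Adj i j

/-- `s` is a clique of `G`. -/
def ClqOn (G : SimpleGraph V) (s : Finset V) : Prop :=
  ∀ i ∈ s, ∀ j ∈ s, i ≠ j → G.Adj i j

/-- max size of an independent subset of `s`. -/
noncomputable def alphaOn (G : SimpleGraph V) (s : Finset V) : ℕ :=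
  (s.powerset.filter (fun t => IndOn G t)).sup Finset.card

/-- max size of a clique inside `s`. -/
noncomputable def omegaOn (G : SimpleGraph V) (s : Finset V) : ℕ :=
  (s.powerset.filter (fun t => ClqOn G t)).sup Finset.card

/-- `s` can be properly colored with colors `< n`. -/
def ChromOn (G : SimpleGraph V) (n : ℕ) (s : Finset V) : Prop :=
  ∃ f : V → ℕ, (∀ i ∈ s, f i < n) ∧ ∀ i ∈ s, ∀ j ∈ s, G.Adj i j → f i ≠ f j

lemma IndOn.empty (G : SimpleGraph V) : IndOn G ∅ := by intro i hi; simp at hi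

lemma ClqOn.empty (G : SimpleGraph V) : ClqOn G ∅ := by intro i hi; simp at hi

lemma le_alphaOn {G : SimpleGraph V} {s t : Finset V} (hts : t ⊆ s) (ht : IndOn G t) :
    t.card ≤ alphaOn G s :=
  Finset.le_sup (by simp [Finset.mem_filter, Finset.mem_powerset, hts, ht])

lemma le_omegaOn {G : SimpleGraph V} {s t : Finset V} (hts : t ⊆ s) (ht : ClqOn G t) :
    t.card ≤ omegaOn G s :=
  Finset.le_sup (by simp [Finset.mem_filter, Finset.mem_powerset, hts, ht])

lemma exists_alphaOn (G : SimpleGraph V) (s : Finset V) :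
    ∃ t ⊆ s, IndOn G t ∧ t.card = alphaOn G s := by
  obtain ⟨t, ht, hc⟩ := Finset.exists_mem_eq_sup (s.powerset.filter (fun t => IndOn G t))
    ⟨∅, by simp [IndOn.empty]⟩ Finset.card
  simp only [Finset.mem_filter, Finset.mem_powerset] at ht
  exact ⟨t, ht.1, ht.2, hc.symm⟩

lemma exists_omegaOn (G : SimpleGraph V) (s : Finset V) :
    ∃ t ⊆ s, ClqOn G t ∧ t.card = omegaOn G s := by
  obtain ⟨t, ht, hc⟩ := Finset.exists_mem_eq_sup (s.powerset.filter (fun t => ClqOn G t))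
    ⟨∅, by simp [ClqOn.empty]⟩ Finset.card
  simp only [Finset.mem_filter, Finset.mem_powerset] at ht
  exact ⟨t, ht.1, ht.2, hc.symm⟩

lemma omegaOn_mono {G : SimpleGraph V} {s s' : Finset V} (h : s ⊆ s') :
    omegaOn G s ≤ omegaOn G s' := by
  obtain ⟨t, hts, ht, hc⟩ := exists_omegaOn G s
  exact hc ▸ le_omegaOn (hts.trans h) ht

lemma one_le_omegaOn {G : SimpleGraph V} {s : Finset V} {v : V} (hv : v ∈ s) :
    1 ≤ omegaOn G s := by
  have : ({v} : Finset V).card ≤ omegaOn G s :=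
    le_omegaOn (by simpa using hv) (by intro i hi j hj hij; simp_all)
  simpa using this

lemma one_le_alphaOn {G : SimpleGraph V} {s : Finset V} {v : V} (hv : v ∈ s) :
    1 ≤ alphaOn G s := by
  have : ({v} : Finset V).card ≤ alphaOn G s :=
    le_alphaOn (by simpa using hv) (by intro i hi j hj hij; simp_all)
  simpa using this

lemma indOn_compl {G : SimpleGraph V} {s : Finset V} : IndOn Gᶜ s ↔ ClqOn G s := by
  constructor <;> intro h i hi j hj hij
  · have := h i hi j hj hij
    simp only [SimpleGraph.compl_adj, not_and, not_not] at this
    exact this hij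
  · simp only [SimpleGraph.compl_adj, not_and, not_not]
    intro _; exact h i hi j hj hij

lemma clqOn_compl {G : SimpleGraph V} {s : Finset V} : ClqOn Gᶜ s ↔ IndOn G s := by
  constructor <;> intro h i hi j hj hij
  · exact ((h i hi j hj hij).2)
  · exact ⟨hij, h i hi j hj hij⟩

lemma alphaOn_compl {G : SimpleGraph V} {s : Finset V} : alphaOn Gᶜ s = omegaOn G s := by
  unfold alphaOn omegaOn
  congr 1
  ext t
  simp [indOn_compl]

lemma omegaOn_compl {G : SimpleGraph V} {s : Finset V} : omegaOn Gᶜ s = alphaOn G s := by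
  unfold alphaOn omegaOn
  congr 1
  ext t
  simp [clqOn_compl]

/-- a clique and an independent set meet in at most one vertex. -/
lemma card_inter_le_one {G : SimpleGraph V} {K A : Finset V} (hK : ClqOn G K)
    (hA : IndOn G A) : (K ∩ A).card ≤ 1 := by
  by_contra h
  push_neg at h
  obtain ⟨i, hi, j, hj, hij⟩ := Finset.one_lt_card.mp h
  simp only [Finset.mem_inter] at hi hj
  exact hA i hi.2 j hj.2 hij (hK i hi.1 j hj.1 hij)

/-- Counting: a proper coloring of `s` with `n` colors shows `|s| ≤ n·α(s)`. -/
lemma card_le_of_chromOn {G : SimpleGraph V} {n : ℕ} {s : Finset V}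
    (h : ChromOn G n s) : s.card ≤ n * alphaOn G s := by
  obtain ⟨f, hlt, hprop⟩ := h
  have := Finset.card_eq_sum_card_fiberwise (f := f) (s := s) (t := Finset.range n)
    (fun x hx => Finset.mem_range.mpr (hlt x hx))
  rw [this]
  calc ∑ c ∈ Finset.range n, (s.filter fun x => f x = c).card
      ≤ ∑ _c ∈ Finset.range n, alphaOn G s := by
        refine Finset.sum_le_sum fun c _ => ?_
        refine le_alphaOn (Finset.filter_subset _ _) ?_
        intro i hi j hj hij hadj
        simp only [Finset.mem_filter] at hi hj
        exact hprop i hi.1 j hj.1 hadj (hi.2.trans hj.2.symm)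
    _ = n * alphaOn G s := by simp [Finset.sum_const, mul_comm]

/-- clique lower bound on colorings. -/
lemma omegaOn_le_of_chromOn {G : SimpleGraph V} {n : ℕ} {s : Finset V}
    (h : ChromOn G n s) : omegaOn G s ≤ n := by
  obtain ⟨f, hlt, hprop⟩ := h
  obtain ⟨t, hts, ht, hc⟩ := exists_omegaOn G s
  rw [← hc]
  calc t.card ≤ (Finset.range n).card := by
        apply Finset.card_le_card_of_injOn f
        · exact fun x hx => Finset.mem_range.mpr (hlt x (hts hx))
        · intro i hi j hj hfij
          by_contra hij
          exact hprop i (hts hi) j (hts hj) (ht i hi j hj hij) hfij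
    _ = n := Finset.card_range n

lemma chromOn_mono {G : SimpleGraph V} {n m : ℕ} {s : Finset V} (hnm : n ≤ m)
    (h : ChromOn G n s) : ChromOn G m s := by
  obtain ⟨f, hlt, hprop⟩ := h
  exact ⟨f, fun i hi => lt_of_lt_of_le (hlt i hi) hnm, hprop⟩


/-- remap: delete an unused color. -/
lemma chromOn_of_unused {G : SimpleGraph V} {n c : ℕ} {s : Finset V} {f : V → ℕ}
    (hlt : ∀ i ∈ s, f i < n) (hprop : ∀ i ∈ s, ∀ j ∈ s, G.Adj i j → f i ≠ f j)
    (hc : c < n) (hunused : ∀ i ∈ s, f i ≠ c) : ChromOn G (n - 1) s := by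
  refine ⟨fun v => if f v < c then f v else f v - 1, ?_, ?_⟩
  · intro i hi
    have h1 := hlt i hi
    have h2 := hunused i hi
    by_cases h : f i < c <;> simp [h] <;> omega
  · intro i hi j hj hadj
    have h1 := hprop i hi j hj hadj
    have h2 := hunused i hi
    have h3 := hunused j hj
    by_cases hi' : f i < c <;> by_cases hj' : f j < c <;> simp [hi', hj'] <;> omega

/-- extend a coloring of `s.erase a` by a fresh color for `a`. -/
lemma chromOn_insert {G : SimpleGraph V} {n : ℕ} {s : Finset V} {a : V}
    (h : ChromOn G n (s.erase a)) : ChromOn G (n + 1) s := by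
  obtain ⟨f, hlt, hprop⟩ := h
  refine ⟨fun v => if v = a then n else f v, ?_, ?_⟩
  · intro i hi
    by_cases h : i = a
    · simp [h]
    · simpa [h] using Nat.lt_succ_of_lt (hlt i (Finset.mem_erase.mpr ⟨h, hi⟩))
  · intro i hi j hj hadj
    by_cases hia : i = a <;> by_cases hja : j = a
    · exact absurd (hia.trans hja.symm ▸ hadj) (G.loopless.irrefl _)
    · have := hlt j (Finset.mem_erase.mpr ⟨hja, hj⟩)
      beta_reduce; rw [if_pos hia, if_neg hja]
      omega
    · have := hlt i (Finset.mem_erase.mpr ⟨hia, hi⟩)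
      beta_reduce; rw [if_pos hja, if_neg hia]
      omega
    · simpa [hia, hja] using
        hprop i (Finset.mem_erase.mpr ⟨hia, hi⟩) j (Finset.mem_erase.mpr ⟨hja, hj⟩) hadj


lemma quad_nonneg {B : Matrix V V ℝ} (hB : B.PosSemidef) (x : V → ℝ) :
    0 ≤ ∑ i, ∑ j, x i * B i j * x j := by
  have h := hB.dotProduct_mulVec_nonneg x
  simpa [dotProduct, Matrix.mulVec, Finset.mul_sum, mul_assoc] using h

lemma bsymm {B : Matrix V V ℝ} (hB : B.PosSemidef) (i j : V) : B j i = B i j := by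
  have := hB.1
  conv_lhs => rw [← this]
  simp [Matrix.conjTranspose_apply]

/-- key SDP bound: a covering of `V` by `n` cliques of `G` bounds the total sum of a
feasible matrix by `n`. -/
lemma sum_le_of_cover {G : SimpleGraph V} {n : ℕ} {f : V → ℕ}
    (hlt : ∀ v, f v < n) (hf : ∀ i j, f i = f j → i ≠ j → G.Adj i j)
    {B : Matrix V V ℝ} (hB : B.PosSemidef) (htr : B.trace = 1)
    (hadj : ∀ i j, G.Adj i j → B i j = 0) :
    ∑ i, ∑ j, B i j ≤ n := by
  classical
  set u : ℕ → V → ℝ := fun c v => if f v = c then 1 else 0 with hu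
  set P : ℕ → ℕ → ℝ := fun c d => ∑ i, ∑ j, u c i * B i j * u d j with hP
  have hpart : ∀ i : V, ∑ c ∈ Finset.range n, u c i = 1 := by
    intro i
    rw [hu]
    simp only []
    rw [Finset.sum_ite_eq (Finset.range n) (f i) (fun _ => (1:ℝ))]
    simp [hlt i]
  -- (1) total sum identity
  have h1 : ∀ i j : V, ∑ c ∈ Finset.range n, ∑ d ∈ Finset.range n,
      u c i * B i j * u d j = B i j := by
    intro i j
    calc ∑ c ∈ Finset.range n, ∑ d ∈ Finset.range n, u c i * B i j * u d j
        = ∑ c ∈ Finset.range n, (u c i * B i j) * ∑ d ∈ Finset.range n, u d j := by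
          refine Finset.sum_congr rfl fun c _ => ?_
          rw [Finset.mul_sum]
      _ = ∑ c ∈ Finset.range n, u c i * B i j := by rw [hpart j]; simp
      _ = (∑ c ∈ Finset.range n, u c i) * B i j := by rw [Finset.sum_mul]
      _ = B i j := by rw [hpart i, one_mul]
  have htot : ∑ c ∈ Finset.range n, ∑ d ∈ Finset.range n, P c d = ∑ i, ∑ j, B i j := by
    have e1 : ∑ c ∈ Finset.range n, ∑ d ∈ Finset.range n, P c d
        = ∑ i, ∑ c ∈ Finset.range n, ∑ d ∈ Finset.range n, ∑ j, u c i * B i j * u d j := by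
      simp only [hP]
      rw [show (∑ c ∈ range n, ∑ d ∈ range n, ∑ i, ∑ j, u c i * B i j * u d j)
          = ∑ c ∈ range n, ∑ i, ∑ d ∈ range n, ∑ j, u c i * B i j * u d j from
        Finset.sum_congr rfl fun c _ => Finset.sum_comm]
      exact Finset.sum_comm
    rw [e1]
    refine Finset.sum_congr rfl fun i _ => ?_
    have e2 : ∑ c ∈ range n, ∑ d ∈ range n, ∑ j, u c i * B i j * u d j
        = ∑ j, ∑ c ∈ range n, ∑ d ∈ range n, u c i * B i j * u d j := by
      rw [show (∑ c ∈ range n, ∑ d ∈ range n, ∑ j, u c i * B i j * u d j)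
          = ∑ c ∈ range n, ∑ j, ∑ d ∈ range n, u c i * B i j * u d j from
        Finset.sum_congr rfl fun c _ => Finset.sum_comm]
      exact Finset.sum_comm
    rw [e2]
    exact Finset.sum_congr rfl fun j _ => h1 i j
  have hPcc : ∑ c ∈ Finset.range n, P c c = 1 := by
    have e3 : ∑ c ∈ Finset.range n, P c c
        = ∑ i, ∑ c ∈ Finset.range n, ∑ j, u c i * B i j * u c j := by
      simp only [hP]; exact Finset.sum_comm
    rw [e3]
    have e4 : ∀ i : V, ∑ c ∈ Finset.range n, ∑ j, u c i * B i j * u c j = B i i := by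
      intro i
      have e5 : ∀ c, ∑ j, u c i * B i j * u c j = u c i * B i i * u c i := by
        intro c
        refine Finset.sum_eq_single i ?_ (by simp)
        intro j _ hji
        by_cases hij : f i = f j
        · rw [hadj i j (hf i j hij (Ne.symm hji))]; ring
        · rw [hu]; simp only []
          by_cases h : f i = c
          · have hj : ¬ (f j = c) := fun hc => hij (h.trans hc.symm)
            simp [hj]
          · simp [h]
      rw [Finset.sum_congr rfl fun c _ => e5 c]
      have e6 : ∀ c, u c i * B i i * u c i = if f i = c then B i i else 0 := by
        intro c; rw [hu]; simp only []; by_cases h : f i = c <;> simp [h]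
      rw [Finset.sum_congr rfl fun c _ => e6 c,
        Finset.sum_ite_eq (range n) (f i) fun _ => B i i]
      simp [hlt i]
    rw [Finset.sum_congr rfl fun i _ => e4 i]
    simpa [Matrix.trace, Matrix.diag] using htr
  have hPsymm : ∀ c d, P d c = P c d := by
    intro c d
    simp only [hP]
    rw [Finset.sum_comm]
    refine Finset.sum_congr rfl fun i _ => Finset.sum_congr rfl fun j _ => ?_
    rw [bsymm hB]
    ring
  have hexpand : ∀ c d, (0:ℝ) ≤ P c c - P c d - P d c + P d d := by
    intro c d
    have h := quad_nonneg hB (fun i => u c i - u d i)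
    have e : ∑ i, ∑ j, (u c i - u d i) * B i j * (u c j - u d j)
        = P c c - P c d - P d c + P d d := by
      simp only [hP, ← Finset.sum_add_distrib, ← Finset.sum_sub_distrib]
      exact Finset.sum_congr rfl fun i _ => Finset.sum_congr rfl fun j _ => by ring
    rw [e] at h
    exact h
  have h0 : (0:ℝ) ≤ ∑ c ∈ range n, ∑ d ∈ range n, (P c c - P c d - P d c + P d d) :=
    Finset.sum_nonneg fun c _ => Finset.sum_nonneg fun d _ => hexpand c d
  have e7 : ∀ c, ∑ d ∈ range n, (P c c - P c d - P d c + P d d)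
      = (n:ℝ) * P c c - (∑ d ∈ range n, P c d) - (∑ d ∈ range n, P c d)
        + (∑ d ∈ range n, P d d) := by
    intro c
    rw [Finset.sum_add_distrib, Finset.sum_sub_distrib, Finset.sum_sub_distrib,
        Finset.sum_const, Finset.card_range, nsmul_eq_mul,
        Finset.sum_congr rfl fun d _ => hPsymm c d]
  have e8 : ∑ c ∈ range n, ∑ d ∈ range n, (P c c - P c d - P d c + P d d)
      = (n:ℝ) * (∑ c ∈ range n, P c c) - (∑ c ∈ range n, ∑ d ∈ range n, P c d)
        - (∑ c ∈ range n, ∑ d ∈ range n, P c d) + (n:ℝ) * (∑ d ∈ range n, P d d) := by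
    rw [Finset.sum_congr rfl fun c _ => e7 c]
    rw [Finset.sum_add_distrib, Finset.sum_sub_distrib, Finset.sum_sub_distrib,
      ← Finset.mul_sum, Finset.sum_const, Finset.card_range, nsmul_eq_mul]
  rw [← htot]
  rw [e8, hPcc] at h0
  linarith [h0]


/-- The feasible matrix associated with an independent set. -/
lemma indep_feasible {G : SimpleGraph V} {S : Finset V} (hS : IndOn G S) (hne : S.Nonempty) :
    ∃ B : Matrix V V ℝ, B.PosSemidef ∧ B.trace = 1 ∧
      (∀ i j, G.Adj i j → B i j = 0) ∧ (∀ i j, 0 ≤ B i j) ∧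
      (S.card : ℝ) = ∑ i, ∑ j, B i j := by
  have hc : (0:ℝ) < S.card := by exact_mod_cast hne.card_pos
  set c : ℝ := (S.card : ℝ)⁻¹ with hcdef
  have hc0 : 0 < c := inv_pos.mpr hc
  set B : Matrix V V ℝ := Matrix.of (fun i j => if i ∈ S ∧ j ∈ S then c else 0) with hBdef
  have hent : ∀ i j, B i j = if i ∈ S ∧ j ∈ S then c else 0 := fun i j => rfl
  have hrow : ∀ (x : V → ℝ) i, (∑ j, B i j * x j)
      = if i ∈ S then c * ∑ j ∈ S, x j else 0 := by
    intro x i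
    by_cases h : i ∈ S
    · simp only [hent, h, true_and, if_pos]
      rw [Finset.mul_sum]
      simp only [show ∀ j, (if j ∈ S then c else 0) * x j = if j ∈ S then c * x j else 0 from
        fun j => by split <;> simp]
      rw [Finset.sum_ite_mem, Finset.univ_inter]
    · simp [hent, h]
  refine ⟨B, Matrix.PosSemidef.of_dotProduct_mulVec_nonneg ?_ ?_, ?_, ?_, ?_, ?_⟩
  · ext i j
    simp only [Matrix.conjTranspose_apply, hent, star_trivial]
    by_cases h1 : i ∈ S <;> by_cases h2 : j ∈ S <;> simp [h1, h2]
  · intro x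
    have h2 : ∀ i, x i * (∑ j, B i j * x j)
        = if i ∈ S then x i * (c * ∑ j ∈ S, x j) else 0 := by
      intro i
      rw [hrow x i]
      split <;> simp
    have hQ : (star x) ⬝ᵥ B.mulVec x = c * ((∑ j ∈ S, x j) * (∑ j ∈ S, x j)) := by
      calc (star x) ⬝ᵥ B.mulVec x = ∑ i, x i * ∑ j, B i j * x j := by
            simp [dotProduct, Matrix.mulVec]
        _ = ∑ i, if i ∈ S then x i * (c * ∑ j ∈ S, x j) else 0 :=
            Finset.sum_congr rfl fun i _ => h2 i
        _ = ∑ i ∈ S, x i * (c * ∑ j ∈ S, x j) := by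
            rw [Finset.sum_ite_mem, Finset.univ_inter]
        _ = (∑ i ∈ S, x i) * (c * ∑ j ∈ S, x j) := by rw [← Finset.sum_mul]
        _ = c * ((∑ j ∈ S, x j) * (∑ j ∈ S, x j)) := by ring
    rw [hQ]
    exact mul_nonneg (le_of_lt hc0) (mul_self_nonneg _)
  · simp only [Matrix.trace, Matrix.diag, hent, and_self]
    rw [Finset.sum_ite_mem, Finset.univ_inter, Finset.sum_const, nsmul_eq_mul, hcdef]
    exact mul_inv_cancel₀ (ne_of_gt hc)
  · intro i j hadj
    rw [hent]
    split
    · next h => exact absurd hadj (hS i h.1 j h.2 hadj.ne)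
    · rfl
  · intro i j
    rw [hent]
    split
    · exact le_of_lt hc0
    · exact le_rfl
  · have : ∀ i, ∑ j, B i j = if i ∈ S then c * S.card else 0 := by
      intro i
      have := hrow (fun _ => 1) i
      simpa using this
    rw [Finset.sum_congr rfl fun i _ => this i, Finset.sum_ite_mem, Finset.univ_inter,
      Finset.sum_const, nsmul_eq_mul, hcdef]
    field_simp

lemma theta_mem_le {G : SimpleGraph V} {n : ℕ} {f : V → ℕ}
    (hlt : ∀ v, f v < n) (hf : ∀ i j, f i = f j → i ≠ j → G.Adj i j) {x : ℝ}
    (hx : x ∈ { x : ℝ | ∃ B : Matrix V V ℝ, B.PosSemidef ∧ B.trace = 1 ∧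
      (∀ i j, G.Adj i j → B i j = 0) ∧ x = ∑ i, ∑ j, B i j }) : x ≤ n := by
  obtain ⟨B, hB, htr, hadj, rfl⟩ := hx
  exact sum_le_of_cover hlt hf hB htr hadj

lemma thetaSet_bddAbove (G : SimpleGraph V) :
    BddAbove { x : ℝ | ∃ B : Matrix V V ℝ, B.PosSemidef ∧ B.trace = 1 ∧
      (∀ i j, G.Adj i j → B i j = 0) ∧ x = ∑ i, ∑ j, B i j } := by
  refine ⟨(Fintype.card V : ℝ), fun x hx => ?_⟩
  refine theta_mem_le (f := fun v => ((Fintype.equivFin V) v : ℕ))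
    (fun v => ((Fintype.equivFin V) v).2) ?_ hx
  intro i j hfij hij
  exact absurd ((Fintype.equivFin V).injective (Fin.val_injective hfij)) hij

lemma schrijver_subset_theta (G : SimpleGraph V) :
    { x : ℝ | ∃ B : Matrix V V ℝ, B.PosSemidef ∧ B.trace = 1 ∧
      (∀ i j, G.Adj i j → B i j = 0) ∧ (∀ i j, 0 ≤ B i j) ∧ x = ∑ i, ∑ j, B i j }
    ⊆ { x : ℝ | ∃ B : Matrix V V ℝ, B.PosSemidef ∧ B.trace = 1 ∧
      (∀ i j, G.Adj i j → B i j = 0) ∧ x = ∑ i, ∑ j, B i j } := by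
  rintro x ⟨B, h1, h2, h3, _, h5⟩
  exact ⟨B, h1, h2, h3, h5⟩

lemma theta_eq {G : SimpleGraph V} {S : Finset V} {n : ℕ}
    (hS : IndOn G S) (hcard : S.card = n) (hne : S.Nonempty)
    {f : V → ℕ} (hlt : ∀ v, f v < n) (hf : ∀ i j, f i = f j → i ≠ j → G.Adj i j) :
    schrijverTheta G = n ∧ lovaszTheta G = n := by
  have hmemS : ((S.card : ℝ)) ∈ { x : ℝ | ∃ B : Matrix V V ℝ, B.PosSemidef ∧ B.trace = 1 ∧
      (∀ i j, G.Adj i j → B i j = 0) ∧ (∀ i j, 0 ≤ B i j) ∧ x = ∑ i, ∑ j, B i j } :=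
    indep_feasible hS hne
  have hmemT := schrijver_subset_theta G hmemS
  unfold schrijverTheta lovaszTheta
  have h1 : (S.card : ℝ) ≤ sSup { x : ℝ | ∃ B : Matrix V V ℝ, B.PosSemidef ∧ B.trace = 1 ∧
      (∀ i j, G.Adj i j → B i j = 0) ∧ (∀ i j, 0 ≤ B i j) ∧ x = ∑ i, ∑ j, B i j } :=
    le_csSup (BddAbove.mono (schrijver_subset_theta G) (thetaSet_bddAbove G)) hmemS
  have h2 : (S.card : ℝ) ≤ sSup { x : ℝ | ∃ B : Matrix V V ℝ, B.PosSemidef ∧ B.trace = 1 ∧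
      (∀ i j, G.Adj i j → B i j = 0) ∧ x = ∑ i, ∑ j, B i j } :=
    le_csSup (thetaSet_bddAbove G) hmemT
  have h3 : sSup { x : ℝ | ∃ B : Matrix V V ℝ, B.PosSemidef ∧ B.trace = 1 ∧
      (∀ i j, G.Adj i j → B i j = 0) ∧ (∀ i j, 0 ≤ B i j) ∧ x = ∑ i, ∑ j, B i j }
      ≤ sSup { x : ℝ | ∃ B : Matrix V V ℝ, B.PosSemidef ∧ B.trace = 1 ∧
      (∀ i j, G.Adj i j → B i j = 0) ∧ x = ∑ i, ∑ j, B i j } :=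
    Real.sSup_le (fun x hx => le_csSup (thetaSet_bddAbove G) (schrijver_subset_theta G hx))
      (le_trans (by positivity) h2)
  have hup : sSup { x : ℝ | ∃ B : Matrix V V ℝ, B.PosSemidef ∧ B.trace = 1 ∧
      (∀ i j, G.Adj i j → B i j = 0) ∧ x = ∑ i, ∑ j, B i j } ≤ (n : ℝ) :=
    Real.sSup_le (fun x hx => theta_mem_le hlt hf hx) (Nat.cast_nonneg n)
  have hcast : ((S.card : ℝ)) = (n : ℝ) := by exact_mod_cast congrArg Nat.cast hcard
  rw [hcast] at h1 h2
  constructor <;> linarith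

lemma theta_empty [IsEmpty V] (G : SimpleGraph V) :
    schrijverTheta G = 0 ∧ lovaszTheta G = 0 := by
  have htr : ∀ B : Matrix V V ℝ, B.trace = 0 := fun B => by
    simp [Matrix.trace]
  unfold schrijverTheta lovaszTheta
  constructor
  · rw [show { x : ℝ | ∃ B : Matrix V V ℝ, B.PosSemidef ∧ B.trace = 1 ∧
      (∀ i j, G.Adj i j → B i j = 0) ∧ (∀ i j, 0 ≤ B i j) ∧ x = ∑ i, ∑ j, B i j } = ∅ from
      Set.eq_empty_iff_forall_notMem.mpr (by
        rintro x ⟨B, _, htr1, _⟩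
        rw [htr B] at htr1
        norm_num at htr1)]
    exact Real.sSup_empty
  · rw [show { x : ℝ | ∃ B : Matrix V V ℝ, B.PosSemidef ∧ B.trace = 1 ∧
      (∀ i j, G.Adj i j → B i j = 0) ∧ x = ∑ i, ∑ j, B i j } = ∅ from
      Set.eq_empty_iff_forall_notMem.mpr (by
        rintro x ⟨B, _, htr1, _⟩
        rw [htr B] at htr1
        norm_num at htr1)]
    exact Real.sSup_empty


/-- If `s` is a minimal non-ω-colorable set, then for every nonempty independent
`A ⊆ s` there is an `ω`-clique in `s` avoiding `A`. -/
lemma exists_clique_avoiding {G : SimpleGraph V} {s A : Finset V}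
    (ih : ∀ t ⊂ s, ChromOn G (omegaOn G t) t)
    (hno : ¬ ChromOn G (omegaOn G s) s)
    (hAs : A ⊆ s) (hA : IndOn G A) (hAne : A.Nonempty) :
    ∃ K ⊆ s \ A, ClqOn G K ∧ K.card = omegaOn G s := by
  have hω1 : 1 ≤ omegaOn G s := one_le_omegaOn (hAs hAne.choose_spec)
  have hssub : s \ A ⊂ s := by
    obtain ⟨a, ha⟩ := hAne
    refine Finset.ssubset_iff_of_subset (Finset.sdiff_subset) |>.mpr ⟨a, hAs ha, ?_⟩
    simp [ha]
  have h1 := ih _ hssub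
  have h2 : omegaOn G (s \ A) = omegaOn G s := by
    refine le_antisymm (omegaOn_mono Finset.sdiff_subset) ?_
    by_contra hlt
    push_neg at hlt
    obtain ⟨f, hflt, hfprop⟩ := chromOn_mono (by omega : omegaOn G (s \ A) ≤ omegaOn G s - 1) h1
    refine hno ⟨fun v => if v ∈ A then omegaOn G s - 1 else f v, ?_, ?_⟩
    · intro i hi
      by_cases h : i ∈ A <;> simp only [if_pos, if_neg, h]
      · omega
      · exact lt_of_lt_of_le (hflt i (Finset.mem_sdiff.mpr ⟨hi, h⟩)) (by omega)
    · intro i hi j hj hadj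
      by_cases hiA : i ∈ A <;> by_cases hjA : j ∈ A
      · exact absurd hadj (hA i hiA j hjA (fun h => G.loopless.irrefl _ (h ▸ hadj)))
      · beta_reduce; rw [if_pos hiA, if_neg hjA]
        have := hflt j (Finset.mem_sdiff.mpr ⟨hj, hjA⟩)
        omega
      · beta_reduce; rw [if_pos hjA, if_neg hiA]
        have := hflt i (Finset.mem_sdiff.mpr ⟨hi, hiA⟩)
        omega
      · simpa [hiA, hjA] using hfprop i (Finset.mem_sdiff.mpr ⟨hi, hiA⟩)
          j (Finset.mem_sdiff.mpr ⟨hj, hjA⟩) hadj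
  obtain ⟨K, hK1, hK2, hK3⟩ := exists_omegaOn G (s \ A)
  exact ⟨K, hK1, hK2, hK3.trans h2⟩

theorem gasparian (G : SimpleGraph V)
    (hcond : ∀ t : Finset V, t.card ≤ alphaOn G t * omegaOn G t) :
    ∀ s : Finset V, ChromOn G (omegaOn G s) s := by
  intro s
  induction s using Finset.strongInduction with
  | _ s ih =>
  by_contra hno
  have hsne : s.Nonempty := by
    rcases s.eq_empty_or_nonempty with rfl | h
    · exact absurd (⟨fun _ => 0, by simp, by simp⟩ : ChromOn G (omegaOn G ∅) ∅) hno
    · exact h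
  have hω1 : 1 ≤ omegaOn G s := one_le_omegaOn hsne.choose_spec
  have hα1 : 1 ≤ alphaOn G s := one_le_alphaOn hsne.choose_spec
  set ω := omegaOn G s with hωdef
  set α := alphaOn G s with hαdef
  obtain ⟨A₀, hA₀s, hA₀ind, hA₀c⟩ := exists_alphaOn G s
  -- ω-colorings of s.erase a, attaining every color
  have hcol : ∀ a ∈ s, ∃ f : V → ℕ, (∀ i ∈ s.erase a, f i < ω) ∧
      (∀ i ∈ s.erase a, ∀ j ∈ s.erase a, G.Adj i j → f i ≠ f j) ∧
      (∀ c < ω, ∃ v ∈ s.erase a, f v = c) := by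
    intro a ha
    have herase : s.erase a ⊂ s := Finset.erase_ssubset ha
    obtain ⟨f, h1, h2⟩ :=
      chromOn_mono (omegaOn_mono herase.subset) (ih _ herase)
    refine ⟨f, h1, h2, ?_⟩
    intro c hc
    by_contra hcempty
    push_neg at hcempty
    have h3 : ChromOn G (ω - 1) (s.erase a) := chromOn_of_unused h1 h2 hc hcempty
    have h4 : ChromOn G ω s := by
      have := chromOn_insert (s := s) (a := a) h3
      rwa [Nat.sub_add_cancel hω1] at this
    exact hno h4
  choose! fcol hfcol1 hfcol2 hfcol3 using hcol
  -- the family of αω+1 independent sets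
  set AA : Option (↥A₀ × Fin ω) → Finset V := fun i => match i with
    | none => A₀
    | some (a, c) => (s.erase a.1).filter (fun v => fcol a.1 v = c.1) with hAAdef
  have hamem : ∀ a : ↥A₀, a.1 ∈ s := fun a => hA₀s a.2
  have hAAs : ∀ i, AA i ⊆ s := by
    rintro (_ | ⟨a, c⟩)
    · exact hA₀s
    · exact (Finset.filter_subset _ _).trans (Finset.erase_subset _ _)
  have hAAind : ∀ i, IndOn G (AA i) := by
    rintro (_ | ⟨a, c⟩)
    · exact hA₀ind
    · intro i hi j hj hij hadj
      simp only [AA, Finset.mem_filter] at hi hj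
      exact hfcol2 a.1 (hamem a) i hi.1 j hj.1 hadj (hi.2.trans hj.2.symm)
  have hAAne : ∀ i, (AA i).Nonempty := by
    rintro (_ | ⟨a, c⟩)
    · exact Finset.card_pos.mp (by rw [hA₀c]; omega)
    · obtain ⟨v, hv, hfv⟩ := hfcol3 a.1 (hamem a) c.1 c.2
      exact ⟨v, by simp [AA, hv, hfv]⟩
  -- cliques avoiding each member of the family
  have hKK : ∀ i, ∃ K ⊆ s \ AA i, ClqOn G K ∧ K.card = ω :=
    fun i => exists_clique_avoiding ih hno (hAAs i) (hAAind i) (hAAne i)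
  choose KK hKKs hKKclq hKKcard using hKK
  have hKKsub : ∀ i, KK i ⊆ s := fun i => (hKKs i).trans Finset.sdiff_subset
  have hKKdisj : ∀ i, (KK i ∩ AA i).card = 0 := by
    intro i
    rw [Finset.card_eq_zero, Finset.eq_empty_iff_forall_notMem]
    intro v hv
    rw [Finset.mem_inter] at hv
    exact (Finset.mem_sdiff.mp (hKKs i hv.1)).2 hv.2
  -- the counting identity
  have hsum : ∀ K : Finset V, K ⊆ s → ClqOn G K → K.card = ω →
      ∑ i : Option (↥A₀ × Fin ω), (K ∩ AA i).card = α * ω := by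
    intro K hKsub hKclq hKcard
    rw [Fintype.sum_option, Fintype.sum_prod_type]
    have hinner : ∀ a : ↥A₀, ∑ c : Fin ω, (K ∩ AA (some (a, c))).card
        = (K.erase a.1).card := by
      intro a
      have hKe : ∀ c : Fin ω, K ∩ AA (some (a, c))
          = (K.erase a.1).filter (fun v => fcol a.1 v = c.1) := by
        intro c
        ext v
        simp only [AA, Finset.mem_inter, Finset.mem_filter, Finset.mem_erase]
        constructor
        · rintro ⟨h1, ⟨h2, h3⟩, h4⟩
          exact ⟨⟨h2, h1⟩, h4⟩
        · rintro ⟨⟨h2, h1⟩, h4⟩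
          exact ⟨h1, ⟨h2, hKsub h1⟩, h4⟩
      calc ∑ c : Fin ω, (K ∩ AA (some (a, c))).card
          = ∑ c : Fin ω, ((K.erase a.1).filter (fun v => fcol a.1 v = (c : ℕ))).card :=
            Finset.sum_congr rfl fun c _ => by rw [hKe c]
        _ = ∑ c ∈ Finset.range ω, ((K.erase a.1).filter (fun v => fcol a.1 v = c)).card :=
            Fin.sum_univ_eq_sum_range
              (fun c => ((K.erase a.1).filter (fun v => fcol a.1 v = c)).card) ω
        _ = (K.erase a.1).card := by
            refine (Finset.card_eq_sum_card_fiberwise ?_).symm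
            intro x hx
            rw [Finset.mem_coe, Finset.mem_erase] at hx
            exact Finset.mem_range.mpr (hfcol1 a.1 (hamem a) x
              (Finset.mem_erase.mpr ⟨hx.1, hKsub hx.2⟩))
      done
    have herase : ∀ a : ↥A₀, (K.erase a.1).card + (if a.1 ∈ K then 1 else 0) = ω := by
      intro a
      rw [Finset.card_erase_eq_ite]
      by_cases h : a.1 ∈ K <;> simp [h, hKcard] <;> omega
    have hsum2 : ∑ a : ↥A₀, ((K.erase a.1).card + (if a.1 ∈ K then 1 else 0)) = α * ω := by
      rw [Finset.sum_congr rfl fun a _ => herase a]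
      simp [Fintype.card_coe, hA₀c, hαdef]
    rw [Finset.sum_add_distrib] at hsum2
    have hind : ∑ a : ↥A₀, (if a.1 ∈ K then 1 else 0) = (K ∩ A₀).card := by
      rw [Finset.sum_coe_sort A₀ (fun v => if v ∈ K then (1:ℕ) else 0),
        Finset.sum_ite_mem, Finset.sum_const, smul_eq_mul, mul_one, Finset.inter_comm]
    have hKA₀ : (K ∩ A₀).card ≤ 1 := card_inter_le_one hKclq hA₀ind
    have : ∑ a : ↥A₀, (K.erase a.1).card + (K ∩ A₀).card = α * ω := by
      rw [← hind]; exact hsum2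
    rw [Finset.sum_congr rfl fun a _ => hinner a]
    have hnone : AA none = A₀ := rfl
    rw [hnone]
    omega
  have hαω1 : 1 ≤ α * ω := Nat.mul_pos hα1 hω1
  have hNcard : Fintype.card (Option (↥A₀ × Fin ω)) = α * ω + 1 := by
    simp [Fintype.card_option, Fintype.card_prod, Fintype.card_coe, hA₀c, hαdef]
  have hone : ∀ j i, i ≠ j → (KK j ∩ AA i).card = 1 := by
    intro j i hij
    have hle := card_inter_le_one (hKKclq j) (hAAind i)
    rcases Nat.lt_or_ge 0 ((KK j ∩ AA i).card) with h | h
    · omega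
    · exfalso
      have hzero_i : (KK j ∩ AA i).card = 0 := by omega
      have hS := hsum (KK j) (hKKsub j) (hKKclq j) (hKKcard j)
      have hsub : ∑ i' : Option (↥A₀ × Fin ω), (KK j ∩ AA i').card
          = ∑ i' ∈ (Finset.univ \ ({i, j} : Finset _)), (KK j ∩ AA i').card := by
        refine (Finset.sum_subset (Finset.subset_univ _) ?_).symm
        intro x _ hx
        simp only [Finset.mem_sdiff, Finset.mem_univ, true_and, not_not,
          Finset.mem_insert, Finset.mem_singleton] at hx
        rcases hx with rfl | h
        · exact hzero_i
        · rw [h]; exact hKKdisj j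
      have hbound : ∑ i' ∈ (Finset.univ \ ({i, j} : Finset _)), (KK j ∩ AA i').card
          ≤ (Finset.univ \ ({i, j} : Finset (Option (↥A₀ × Fin ω)))).card := by
        refine le_trans (Finset.sum_le_card_nsmul _ _ 1
          (fun x _ => card_inter_le_one (hKKclq j) (hAAind x))) ?_
        simp
      have hcard2 : (Finset.univ \ ({i, j} : Finset (Option (↥A₀ × Fin ω)))).card
          = α * ω + 1 - 2 := by
        rw [Finset.card_sdiff_of_subset (Finset.subset_univ _), Finset.card_univ, hNcard,
          Finset.card_insert_of_notMem (by simpa using hij), Finset.card_singleton]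
      omega
  -- linear dependence over ℚ
  have hcards : s.card ≤ α * ω := hcond s
  set w : Option (↥A₀ × Fin ω) → (↥s → ℚ) := fun i v => if v.1 ∈ AA i then 1 else 0
    with hwdef
  have hnotli : ¬ LinearIndependent ℚ w := by
    intro hli
    have h1 := hli.fintype_card_le_finrank
    rw [Module.finrank_pi, Fintype.card_coe, hNcard] at h1
    omega
  obtain ⟨g, hg0, i₀, hgi₀⟩ := Fintype.not_linearIndependent_iff.mp hnotli
  have heval : ∀ v (hv : v ∈ s), ∑ i, g i * (if v ∈ AA i then (1:ℚ) else 0) = 0 := by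
    intro v hv
    have h2 := congrFun hg0 ⟨v, hv⟩
    simpa [hwdef, Finset.sum_apply, Pi.smul_apply, smul_eq_mul] using h2
  have hKeval : ∀ j, ∑ i, g i * ((KK j ∩ AA i).card : ℚ) = 0 := by
    intro j
    have h0 : ∑ v ∈ KK j, ∑ i, g i * (if v ∈ AA i then (1:ℚ) else 0) = 0 :=
      Finset.sum_eq_zero fun v hv => heval v (hKKsub j hv)
    rw [Finset.sum_comm] at h0
    rw [← h0]
    refine Finset.sum_congr rfl fun i _ => ?_
    rw [← Finset.mul_sum]
    congr 1
    rw [Finset.sum_boole, Finset.filter_mem_eq_inter]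
  have hT : ∀ j, g j = ∑ i, g i := by
    intro j
    have h0 := hKeval j
    have h2 : ∑ i, g i * ((KK j ∩ AA i).card : ℚ)
        = ∑ i ∈ Finset.univ.erase j, g i * ((KK j ∩ AA i).card : ℚ) :=
      (Finset.sum_erase _ (by simp [hKKdisj j])).symm
    have h3 : ∑ i ∈ Finset.univ.erase j, g i * ((KK j ∩ AA i).card : ℚ)
        = ∑ i ∈ Finset.univ.erase j, g i := by
      refine Finset.sum_congr rfl fun i hi => ?_
      rw [hone j i (Finset.mem_erase.mp hi).1]
      simp
    have h4 : ∑ i ∈ Finset.univ.erase j, g i = (∑ i, g i) - g j :=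
      Finset.sum_erase_eq_sub (Finset.mem_univ j)
    rw [h2, h3, h4] at h0
    linarith
  have hTzero : (∑ i, g i) = 0 := by
    have h5 : (∑ i, g i) = (Fintype.card (Option (↥A₀ × Fin ω)) : ℚ) * (∑ i, g i) := by
      conv_lhs => rw [Finset.sum_congr rfl fun i _ => hT i]
      simp [Finset.sum_const, Finset.card_univ, nsmul_eq_mul]
      ring
    rw [hNcard] at h5
    have h6 : ((α * ω : ℕ) : ℚ) * (∑ i, g i) = 0 := by push_cast at h5 ⊢; linarith
    rcases mul_eq_zero.mp h6 with h | h
    · exfalso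
      have h7 : (α * ω : ℕ) ≠ 0 := by omega
      exact h7 (by exact_mod_cast h)
    · exact h
  exact hgi₀ (by rw [hT i₀, hTzero])

lemma indepNum_le {W : Type*} [Fintype W] {G : SimpleGraph W} {n : ℕ}
    (h : ∀ s : Finset W, (∀ i ∈ s, ∀ j ∈ s, i ≠ j → ¬ G.Adj i j) → s.card ≤ n) :
    indepNum G ≤ n := by
  refine csSup_le ⟨0, ∅, by simp⟩ ?_
  rintro m ⟨s, hs, rfl⟩
  exact h s hs

lemma le_indepNum {W : Type*} [Fintype W] {G : SimpleGraph W} {s : Finset W}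
    (hs : ∀ i ∈ s, ∀ j ∈ s, i ≠ j → ¬ G.Adj i j) : s.card ≤ indepNum G := by
  refine le_csSup ⟨Fintype.card W, ?_⟩ ⟨s, hs, rfl⟩
  rintro m ⟨t, _, rfl⟩
  exact Finset.card_le_univ t

lemma indepNum_strongPow_le {G : SimpleGraph V} {n : ℕ} {f : V → ℕ}
    (hlt : ∀ v, f v < n) (hf : ∀ i j, f i = f j → i ≠ j → G.Adj i j) (k : ℕ) :
    indepNum (strongPow G k) ≤ n ^ k := by
  refine indepNum_le ?_
  intro s hs
  have h1 : s.card ≤ (Fintype.piFinset (fun _ : Fin k => Finset.range n)).card := by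
    apply Finset.card_le_card_of_injOn (fun x i => f (x i))
    · intro x _
      rw [Finset.mem_coe, Fintype.mem_piFinset]
      exact fun i => Finset.mem_range.mpr (hlt (x i))
    · intro x hx y hy hxy
      by_contra hne
      refine hs x hx y hy hne ⟨hne, fun i => ?_⟩
      by_cases h : x i = y i
      · exact Or.inl h
      · exact Or.inr (hf _ _ (congrFun hxy i) h)
  calc s.card ≤ _ := h1
    _ = n ^ k := by
      rw [Fintype.card_piFinset]
      simp
  done

lemma le_indepNum_strongPow_one {G : SimpleGraph V} {S : Finset V}
    (hS : ∀ i ∈ S, ∀ j ∈ S, i ≠ j → ¬ G.Adj i j) :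
    S.card ≤ indepNum (strongPow G 1) := by
  have hinj : Function.Injective (fun v : V => fun _ : Fin 1 => v) := by
    intro a b hab
    exact congrFun hab 0
  have hcard : (S.image (fun v : V => fun _ : Fin 1 => v)).card = S.card :=
    Finset.card_image_of_injective S hinj
  rw [← hcard]
  refine le_indepNum ?_
  intro x hx y hy hxy hadj
  simp only [Finset.mem_image] at hx hy
  obtain ⟨a, ha, rfl⟩ := hx
  obtain ⟨b, hb, rfl⟩ := hy
  have hab : a ≠ b := fun h => hxy (by rw [h])
  obtain ⟨-, h2⟩ := hadj
  rcases h2 0 with h | h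
  · exact hab h
  · exact hS a ha b hb hab h

lemma shannon_eq {G : SimpleGraph V} {S : Finset V} {n : ℕ}
    (hS : ∀ i ∈ S, ∀ j ∈ S, i ≠ j → ¬ G.Adj i j) (hcard : S.card = n)
    {f : V → ℕ} (hlt : ∀ v, f v < n) (hf : ∀ i j, f i = f j → i ≠ j → G.Adj i j) :
    shannonCapacity G = (n : ℝ) := by
  have hub : ∀ k : ℕ+, (indepNum (strongPow G (k:ℕ)) : ℝ) ^ ((1:ℝ)/((k:ℕ):ℝ)) ≤ n := by
    intro k
    have h1 : (indepNum (strongPow G (k:ℕ)) : ℝ) ≤ ((n:ℝ) ^ (k:ℕ)) := by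
      exact_mod_cast indepNum_strongPow_le hlt hf (k:ℕ)
    have hk0 : (0:ℝ) < ((k:ℕ):ℝ) := by exact_mod_cast k.pos
    calc (indepNum (strongPow G (k:ℕ)) : ℝ) ^ ((1:ℝ)/((k:ℕ):ℝ))
        ≤ ((n:ℝ) ^ (k:ℕ)) ^ ((1:ℝ)/((k:ℕ):ℝ)) :=
          Real.rpow_le_rpow (Nat.cast_nonneg _) h1 (by positivity)
      _ = (n:ℝ) := by
          rw [← Real.rpow_natCast (n:ℝ) (k:ℕ), ← Real.rpow_mul (Nat.cast_nonneg n),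
            mul_one_div, div_self (ne_of_gt hk0), Real.rpow_one]
  have hbdd : BddAbove (Set.range fun k : ℕ+ =>
      (indepNum (strongPow G (k:ℕ)) : ℝ) ^ ((1:ℝ)/((k:ℕ):ℝ))) := by
    refine ⟨n, ?_⟩
    rintro x ⟨k, rfl⟩
    exact hub k
  have hup : shannonCapacity G ≤ n := ciSup_le hub
  have hlo : (n:ℝ) ≤ shannonCapacity G := by
    have h2 : n ≤ indepNum (strongPow G 1) := hcard ▸ le_indepNum_strongPow_one hS
    have h1 : (n : ℝ) ≤ (indepNum (strongPow G ((1:ℕ+):ℕ)) : ℝ) ^ ((1:ℝ)/(((1:ℕ+):ℕ):ℝ)) := by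
      simp only [PNat.one_coe, Nat.cast_one, div_one, Real.rpow_one]
      exact_mod_cast h2
    exact le_trans h1 (le_ciSup hbdd 1)
  linarith


lemma cliqueNum_eq_omegaOn (G : SimpleGraph V) : cliqueNum G = omegaOn G Finset.univ := by
  refine le_antisymm ?_ ?_
  · refine csSup_le ⟨0, ∅, by simp, by simp⟩ ?_
    rintro m ⟨s, hs, rfl⟩
    exact le_omegaOn (Finset.subset_univ s) hs
  · obtain ⟨t, _, ht, htc⟩ := exists_omegaOn G Finset.univ
    refine le_csSup ⟨Fintype.card V, ?_⟩ ⟨t, ht, htc⟩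
    rintro m ⟨u, _, rfl⟩
    exact Finset.card_le_univ u

lemma indepNum_eq_alphaOn (G : SimpleGraph V) : indepNum G = alphaOn G Finset.univ := by
  refine le_antisymm ?_ ?_
  · refine csSup_le ⟨0, ∅, by simp, by simp⟩ ?_
    rintro m ⟨s, hs, rfl⟩
    exact le_alphaOn (Finset.subset_univ s) hs
  · obtain ⟨t, _, ht, htc⟩ := exists_alphaOn G Finset.univ
    refine le_csSup ⟨Fintype.card V, ?_⟩ ⟨t, ht, htc⟩
    rintro m ⟨u, _, rfl⟩
    exact Finset.card_le_univ u

lemma chromOn_of_colorable {G : SimpleGraph V} {t : Finset V} {n : ℕ}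
    (h : (G.induce (t : Set V)).Colorable n) : ChromOn G n t := by
  obtain ⟨C⟩ := h
  refine ⟨fun v => if hv : v ∈ t then (C ⟨v, Finset.mem_coe.mpr hv⟩ : ℕ) else 0, ?_, ?_⟩
  · intro i hi
    simp only [dif_pos hi]
    exact (C ⟨i, Finset.mem_coe.mpr hi⟩).2
  · intro i hi j hj hadj hval
    simp only [dif_pos hi, dif_pos hj] at hval
    have hadj' : (G.induce (t : Set V)).Adj ⟨i, Finset.mem_coe.mpr hi⟩ ⟨j, Finset.mem_coe.mpr hj⟩ := by
      simpa using hadj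
    exact C.valid hadj' (Fin.val_injective hval)

lemma cliqueNum_induce_le (G : SimpleGraph V) (t : Finset V) :
    cliqueNum (G.induce (t : Set V)) ≤ omegaOn G t := by
  refine csSup_le ⟨0, ∅, by simp, by simp⟩ ?_
  rintro m ⟨u, hu, rfl⟩
  rw [← Finset.card_image_of_injective u Subtype.val_injective]
  refine le_omegaOn ?_ ?_
  · intro x hx
    simp only [Finset.mem_image] at hx
    obtain ⟨a, _, rfl⟩ := hx
    exact Finset.mem_coe.mp a.2
  · intro i hi j hj hij
    simp only [Finset.mem_image] at hi hj
    obtain ⟨a, ha, rfl⟩ := hi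
    obtain ⟨b, hb, rfl⟩ := hj
    have hab : a ≠ b := fun h => hij (by rw [h])
    exact hu a ha b hb hab

lemma hcond_of_perfect {G : SimpleGraph V} (hperf : IsPerfect G) :
    ∀ t : Finset V, t.card ≤ alphaOn G t * omegaOn G t := by
  intro t
  have h1 : (G.induce (t : Set V)).Colorable (cliqueNum (G.induce (t : Set V))) :=
    SimpleGraph.chromaticNumber_le_iff_colorable.mp (le_of_eq (hperf t))
  have h4 := card_le_of_chromOn (chromOn_of_colorable h1)
  calc t.card ≤ cliqueNum (G.induce (t : Set V)) * alphaOn G t := h4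
    _ ≤ omegaOn G t * alphaOn G t := Nat.mul_le_mul_right _ (cliqueNum_induce_le G t)
    _ = alphaOn G t * omegaOn G t := Nat.mul_comm _ _

lemma chromaticNumber_eq {G : SimpleGraph V} {m : ℕ} (hchrom : ChromOn G m Finset.univ)
    (hclq : ∃ t : Finset V, ClqOn G t ∧ t.card = m) : G.chromaticNumber = (m : ℕ∞) := by
  obtain ⟨f, hlt, hprop⟩ := hchrom
  have hcol : G.Colorable m := by
    refine ⟨SimpleGraph.Coloring.mk (fun v => ⟨f v, hlt v (Finset.mem_univ v)⟩) ?_⟩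
    intro a b hadj hfab
    exact hprop a (Finset.mem_univ a) b (Finset.mem_univ b) hadj (congrArg Fin.val hfab)
  obtain ⟨t, ht, htc⟩ := hclq
  have hlow : (m : ℕ∞) ≤ G.chromaticNumber := by
    rw [← htc]
    have hcl : G.IsClique (t : Set V) := by
      intro a ha b hb hab
      exact ht a (Finset.mem_coe.mp ha) b (Finset.mem_coe.mp hb) hab
    exact hcl.card_le_chromaticNumber
  exact le_antisymm hcol.chromaticNumber_le hlow


end Stmt16Aux

theorem stmt16 {V : Type*} [Fintype V] (G : SimpleGraph V) (hperf : IsPerfect G) :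
    ((cliqueNum G : ℝ) = schrijverTheta Gᶜ ∧
      schrijverTheta Gᶜ = lovaszTheta Gᶜ ∧
      G.chromaticNumber = (cliqueNum G : ℕ∞) ∧
      shannonCapacity Gᶜ = (cliqueNum G : ℝ)) ∧
    ((indepNum G : ℝ) = schrijverTheta G ∧
      schrijverTheta G = lovaszTheta G ∧
      shannonCapacity G = (indepNum G : ℝ) ∧
      Gᶜ.chromaticNumber = (indepNum G : ℕ∞)) := by
  classical
  rcases isEmpty_or_nonempty V with hV | hV
  · -- the empty graph: everything is zero
    have hcl : cliqueNum G = 0 := by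
      refine Nat.le_antisymm ?_ (Nat.zero_le _)
      refine csSup_le ⟨0, ∅, by simp, by simp⟩ ?_
      rintro m ⟨s, _, rfl⟩
      calc s.card ≤ Finset.univ.card := Finset.card_le_univ s
        _ = 0 := by simp
    have hin : indepNum G = 0 := by
      refine Nat.le_antisymm ?_ (Nat.zero_le _)
      refine csSup_le ⟨0, ∅, by simp, by simp⟩ ?_
      rintro m ⟨s, _, rfl⟩
      calc s.card ≤ Finset.univ.card := Finset.card_le_univ s
        _ = 0 := by simp
    obtain ⟨hth1, hth2⟩ := Stmt16Aux.theta_empty Gᶜ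
    obtain ⟨hth3, hth4⟩ := Stmt16Aux.theta_empty G
    have hscGc : shannonCapacity Gᶜ = ((0:ℕ) : ℝ) :=
      Stmt16Aux.shannon_eq (S := (∅ : Finset V)) (by simp) (by simp)
        (f := fun _ => 0) (fun v => isEmptyElim v) (fun i j _ _ => isEmptyElim i)
    have hscG : shannonCapacity G = ((0:ℕ) : ℝ) :=
      Stmt16Aux.shannon_eq (S := (∅ : Finset V)) (by simp) (by simp)
        (f := fun _ => 0) (fun v => isEmptyElim v) (fun i j _ _ => isEmptyElim i)
    refine ⟨⟨?_, ?_, ?_, ?_⟩, ?_, ?_, ?_, ?_⟩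
    · rw [hcl, hth1]; simp
    · rw [hth1, hth2]
    · rw [hcl, G.chromaticNumber_eq_zero_of_isEmpty]; simp
    · rw [hscGc, hcl]
    · rw [hin, hth3]; simp
    · rw [hth3, hth4]
    · rw [hscG, hin]
    · rw [hin, Gᶜ.chromaticNumber_eq_zero_of_isEmpty]; simp
  · -- the main case
    obtain ⟨v0⟩ := hV
    have hcond := Stmt16Aux.hcond_of_perfect hperf
    have hcondc : ∀ t : Finset V,
        t.card ≤ Stmt16Aux.alphaOn Gᶜ t * Stmt16Aux.omegaOn Gᶜ t := by
      intro t
      rw [Stmt16Aux.alphaOn_compl, Stmt16Aux.omegaOn_compl, Nat.mul_comm]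
      exact hcond t
    have covG : Stmt16Aux.ChromOn G (Stmt16Aux.omegaOn G Finset.univ) Finset.univ :=
      Stmt16Aux.gasparian G hcond Finset.univ
    have covGc : Stmt16Aux.ChromOn Gᶜ (Stmt16Aux.alphaOn G Finset.univ) Finset.univ := by
      have := Stmt16Aux.gasparian Gᶜ hcondc Finset.univ
      rwa [Stmt16Aux.omegaOn_compl] at this
    obtain ⟨Sw, hSwsub, hSwclq, hSwcard⟩ := Stmt16Aux.exists_omegaOn G Finset.univ
    obtain ⟨Sa, hSasub, hSaind, hSacard⟩ := Stmt16Aux.exists_alphaOn G Finset.univ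
    have hw1 : 1 ≤ Stmt16Aux.omegaOn G Finset.univ :=
      Stmt16Aux.one_le_omegaOn (Finset.mem_univ v0)
    have ha1 : 1 ≤ Stmt16Aux.alphaOn G Finset.univ :=
      Stmt16Aux.one_le_alphaOn (Finset.mem_univ v0)
    have hSwne : Sw.Nonempty := Finset.card_pos.mp (by rw [hSwcard]; omega)
    have hSane : Sa.Nonempty := Finset.card_pos.mp (by rw [hSacard]; omega)
    have hclG : cliqueNum G = Stmt16Aux.omegaOn G Finset.univ :=
      Stmt16Aux.cliqueNum_eq_omegaOn G
    have hinG : indepNum G = Stmt16Aux.alphaOn G Finset.univ :=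
      Stmt16Aux.indepNum_eq_alphaOn G
    obtain ⟨fG, hfGlt, hfGprop⟩ := covG
    obtain ⟨fC, hfClt, hfCprop⟩ := covGc
    have hfGlt' : ∀ v, fG v < Stmt16Aux.omegaOn G Finset.univ :=
      fun v => hfGlt v (Finset.mem_univ v)
    have hfGcov : ∀ i j, fG i = fG j → i ≠ j → Gᶜ.Adj i j := by
      intro i j hfij hij
      exact ⟨hij, fun hadj =>
        hfGprop i (Finset.mem_univ i) j (Finset.mem_univ j) hadj hfij⟩
    have hfClt' : ∀ v, fC v < Stmt16Aux.alphaOn G Finset.univ :=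
      fun v => hfClt v (Finset.mem_univ v)
    have hfCcov : ∀ i j, fC i = fC j → i ≠ j → G.Adj i j := by
      intro i j hfij hij
      by_contra hadj
      exact hfCprop i (Finset.mem_univ i) j (Finset.mem_univ j) ⟨hij, hadj⟩ hfij
    obtain ⟨hth1, hth2⟩ := Stmt16Aux.theta_eq (G := Gᶜ) (S := Sw)
      (Stmt16Aux.indOn_compl.mpr hSwclq) hSwcard hSwne hfGlt' hfGcov
    obtain ⟨hth3, hth4⟩ := Stmt16Aux.theta_eq (G := G) (S := Sa)
      hSaind hSacard hSane hfClt' hfCcov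
    have hscGc : shannonCapacity Gᶜ = ((Stmt16Aux.omegaOn G Finset.univ : ℕ) : ℝ) :=
      Stmt16Aux.shannon_eq (G := Gᶜ) (S := Sw)
        (Stmt16Aux.indOn_compl.mpr hSwclq) hSwcard hfGlt' hfGcov
    have hscG : shannonCapacity G = ((Stmt16Aux.alphaOn G Finset.univ : ℕ) : ℝ) :=
      Stmt16Aux.shannon_eq (G := G) (S := Sa) hSaind hSacard hfClt' hfCcov
    have hchG : G.chromaticNumber = ((Stmt16Aux.omegaOn G Finset.univ : ℕ) : ℕ∞) :=
      Stmt16Aux.chromaticNumber_eq ⟨fG, hfGlt, hfGprop⟩ ⟨Sw, hSwclq, hSwcard⟩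
    have hchGc : Gᶜ.chromaticNumber = ((Stmt16Aux.alphaOn G Finset.univ : ℕ) : ℕ∞) :=
      Stmt16Aux.chromaticNumber_eq ⟨fC, hfClt, hfCprop⟩
        ⟨Sa, Stmt16Aux.clqOn_compl.mpr hSaind, hSacard⟩
    refine ⟨⟨?_, ?_, ?_, ?_⟩, ?_, ?_, ?_, ?_⟩
    · rw [hclG, hth1]
    · rw [hth1, hth2]
    · rw [hchG, hclG]
    · rw [hscGc, hclG]
    · rw [hinG, hth3]
    · rw [hth3, hth4]
    · rw [hscG, hinG]
    · rw [hchGc, hinG]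
end

section
/- Let G be a triangle-free finite simple graph on n vertices with at least one edge. Then θ(G) ≥ n^{2/3}/16 (and hence the fractional chromatic number of the complement Ḡ is at least n^{2/3}/16). -/
open scoped Classical

open Matrix Finset in
lemma theta_bddAbove {V : Type*} [Fintype V] (G : SimpleGraph V) :
    BddAbove { x : ℝ | ∃ B : Matrix V V ℝ, B.PosSemidef ∧ B.trace = 1 ∧
    (∀ i j, G.Adj i j → B i j = 0) ∧ x = ∑ i, ∑ j, B i j } := by
  refine ⟨(Fintype.card V : ℝ), ?_⟩
  rintro x ⟨B, hPSD, htr, -, rfl⟩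
  have hsymm : ∀ i j, B j i = B i j := by
    intro i j
    calc B j i = Bᴴ i j := by simp [Matrix.conjTranspose_apply]
    _ = B i j := by rw [hPSD.1]
  have key : ∀ i j : V, 2 * B i j ≤ B i i + B j j := by
    intro i j
    by_cases hij : i = j
    · subst hij
      have h0 := hPSD.dotProduct_mulVec_nonneg (Pi.single i 1)
      have : (Pi.single i 1 : V → ℝ) ⬝ᵥ B *ᵥ (Pi.single i 1) = B i i := by
        simp [Matrix.mulVec, dotProduct, Pi.single_apply, ite_mul, mul_ite]
      rw [show (star (Pi.single i 1) : V → ℝ) = Pi.single i 1 from rfl, this] at h0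
      linarith
    · have h0 := hPSD.dotProduct_mulVec_nonneg (Pi.single i 1 - Pi.single j 1)
      have hform : (Pi.single i 1 - Pi.single j 1 : V → ℝ) ⬝ᵥ B *ᵥ (Pi.single i 1 - Pi.single j 1)
          = B i i - B i j - B j i + B j j := by
        simp [Matrix.mulVec, dotProduct, Pi.single_apply, sub_mul, mul_sub,
          Finset.sum_sub_distrib, ite_mul, mul_ite, hij, Ne.symm hij]
        ring
      rw [show (star (Pi.single i 1 - Pi.single j 1) : V → ℝ) = Pi.single i 1 - Pi.single j 1
        from rfl, hform] at h0
      have := hsymm i j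
      linarith
  calc ∑ i, ∑ j, B i j ≤ ∑ i, ∑ j, (B i i + B j j) / 2 := by
        refine Finset.sum_le_sum fun i _ => Finset.sum_le_sum fun j _ => ?_
        linarith [key i j]
  _ = (Fintype.card V : ℝ) := by
        have htr' : ∑ i, B i i = 1 := htr
        simp only [add_div, Finset.sum_add_distrib, Finset.sum_const, Finset.card_univ,
          nsmul_eq_mul, Finset.sum_div]
        rw [← Finset.mul_sum, ← Finset.sum_div, htr']
        ring

open Matrix Finset in
theorem stmt17 {V : Type*} [Fintype V] (G : SimpleGraph V) (n : ℕ)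
    (hn : Fintype.card V = n) (htf : G.CliqueFree 3) (hedge : ∃ u v, G.Adj u v) :
    (n : ℝ) ^ ((2 : ℝ) / 3) / 16 ≤ lovaszTheta G := by
  obtain ⟨u, v, huv⟩ := hedge
  have hneV : Nonempty V := ⟨u⟩
  have hn1 : 1 ≤ n := by rw [← hn]; exact Fintype.card_pos
  set A : Matrix V V ℝ := G.adjMatrix ℝ with hA
  have hAsymm : ∀ i j, A j i = A i j := by
    intro i j
    by_cases h : G.Adj i j
    · simp [hA, h, h.symm]
    · have h' : ¬ G.Adj j i := fun hc => h hc.symm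
      simp [hA, h, h']
  have hAnn : ∀ i j, 0 ≤ A i j := by
    intro i j; simp only [hA, SimpleGraph.adjMatrix_apply]; split <;> norm_num
  have hAsq : ∀ i j, A i j * A i j = A i j := by
    intro i j; simp only [hA, SimpleGraph.adjMatrix_apply]; split <;> norm_num
  have hAdiag : ∀ i, A i i = 0 := by intro i; simp [hA]
  have hA2edge : ∀ i j, G.Adj i j → ∑ k, A i k * A k j = 0 := by
    intro i j hij
    refine Finset.sum_eq_zero fun k _ => ?_
    by_cases h1 : G.Adj i k
    · by_cases h2 : G.Adj k j
      · exact absurd ((SimpleGraph.is3Clique_triple_iff).2 ⟨hij, h1, h2.symm⟩) (htf _)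
      · simp [hA, h2]
    · simp [hA, h1]
  set d : V → ℝ := fun i => ∑ j, A i j with hd
  set D : ℝ := ∑ i, d i with hD
  set s : ℝ := ∑ i, d i ^ 2 with hs
  have hcol : ∀ k, ∑ i, A i k = d k := fun k => Finset.sum_congr rfl fun i _ => hAsymm k i
  have hD0 : 0 ≤ D := Finset.sum_nonneg fun i _ => Finset.sum_nonneg fun j _ => hAnn i j
  have hs0 : 0 ≤ s := Finset.sum_nonneg fun i _ => sq_nonneg _
  have hCS : D ^ 2 ≤ s * n := by
    have h := Finset.sum_mul_sq_le_sq_mul_sq univ d (fun _ => (1:ℝ))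
    simp only [mul_one, one_pow, Finset.sum_const, Finset.card_univ, hn, nsmul_eq_mul] at h
    calc D ^ 2 = (∑ i, d i * 1) ^ 2 := by simp [hD]
    _ ≤ (∑ i, d i ^ 2) * ((n:ℝ) * 1) := by
        simpa using h
    _ = s * n := by rw [← hs]; ring
  have main : ∀ β : ℝ, 0 ≤ β →
      0 < β * n + β ^ 2 / 4 * n + D →
      (β * (n:ℝ) ^ 2 + β ^ 2 / 4 * n + s - β * D) / (β * n + β ^ 2 / 4 * n + D)
        ≤ lovaszTheta G := by
    intro β hβ hT
    set C : Matrix V V ℝ := A - (β / 2) • 1 with hC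
    set M : Matrix V V ℝ := β • (Matrix.of fun _ _ => (1:ℝ)) + C ^ 2 with hM
    have hCsymm : Cᴴ = C := by
      ext i j
      simp [hC, Matrix.conjTranspose_apply, Matrix.sub_apply, Matrix.smul_apply,
        Matrix.one_apply, hAsymm i j, eq_comm]
    have hMPSD : M.PosSemidef := by
      apply Matrix.PosSemidef.add
      · refine Matrix.PosSemidef.of_dotProduct_mulVec_nonneg ?_ ?_
        · ext i j
          simp [Matrix.conjTranspose_apply, Matrix.smul_apply, Matrix.of_apply]
        · intro x
          have h1 : (star x) ⬝ᵥ (β • (Matrix.of fun _ _ => (1:ℝ))) *ᵥ x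
              = ∑ i, x i * (β * ∑ j, x j) := by
            simp [dotProduct, Matrix.mulVec, Finset.mul_sum]
          rw [h1, ← Finset.sum_mul]
          have h2 : (∑ i, x i) * (β * ∑ j, x j) = β * (∑ i, x i) ^ 2 := by ring
          rw [h2]
          positivity
      · have h := Matrix.posSemidef_conjTranspose_mul_self C
        rwa [hCsymm, ← pow_two] at h
    have hMsymm : ∀ i j, M j i = M i j := by
      intro i j
      conv_lhs => rw [← hMPSD.1]
      simp [Matrix.conjTranspose_apply]
    have hMedge : ∀ i j, G.Adj i j → M i j = 0 := by
      intro i j hij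
      have hne : i ≠ j := G.ne_of_adj hij
      have hAij : A i j = 1 := by simp [hA, hij]
      have hterm : ∀ k, C i k * C k j
          = A i k * A k j + ((if k = j then -(β/2) * A i j else 0)
            + (if k = i then -(β/2) * A i j else 0)) := by
        intro k
        rcases eq_or_ne k i with rfl | hki
        · rcases eq_or_ne k j with rfl | hkj
          · exact absurd rfl hne
          · simp [hC, Matrix.sub_apply, Matrix.smul_apply, Matrix.one_apply, hkj, hne, hAdiag]
              <;> try ring
        · rcases eq_or_ne k j with rfl | hkj
          · simp [hC, Matrix.sub_apply, Matrix.smul_apply, Matrix.one_apply, hki,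
              (Ne.symm hki), hAdiag k, hAsymm] <;> try ring
          · simp [hC, Matrix.sub_apply, Matrix.smul_apply, Matrix.one_apply, hki, hkj,
              Ne.symm hki, Ne.symm hkj] <;> try ring
      have hC2 : (C ^ 2) i j = ∑ k, C i k * C k j := by rw [pow_two, Matrix.mul_apply]
      have hsum : ∑ k, C i k * C k j = -β := by
        rw [Finset.sum_congr rfl fun k _ => hterm k]
        rw [Finset.sum_add_distrib, Finset.sum_add_distrib, hA2edge i j hij]
        rw [Finset.sum_ite_eq' univ j (fun _ => -(β/2) * A i j),
          Finset.sum_ite_eq' univ i (fun _ => -(β/2) * A i j)]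
        simp [hAij]
        ring
      have : M i j = β * 1 + (C ^ 2) i j := by
        simp [hM, Matrix.add_apply, Matrix.smul_apply, Matrix.of_apply]
      rw [this, hC2, hsum]
      ring
    have htrM : M.trace = β * n + β ^ 2 / 4 * n + D := by
      have hterm : ∀ i k, C i k * C k i = A i k + (if k = i then β ^ 2 / 4 else 0) := by
        intro i k
        rcases eq_or_ne k i with rfl | hki
        · simp [hC, Matrix.sub_apply, Matrix.smul_apply, Matrix.one_apply, hAdiag]
          ring
        · simp [hC, Matrix.sub_apply, Matrix.smul_apply, Matrix.one_apply, hki, Ne.symm hki,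
            hAsymm, hAsq]
      have hdiagM : ∀ i, M i i = β + (d i + β ^ 2 / 4) := by
        intro i
        have h1 : M i i = β * 1 + (C ^ 2) i i := by
          simp [hM, Matrix.add_apply, Matrix.smul_apply, Matrix.of_apply]
        rw [h1, pow_two, Matrix.mul_apply]
        rw [Finset.sum_congr rfl fun k _ => hterm i k, Finset.sum_add_distrib,
          Finset.sum_ite_eq' univ i (fun _ => β ^ 2 / 4)]
        simp [hd]
      have htr0 : M.trace = ∑ i, M i i := rfl
      rw [htr0, Finset.sum_congr rfl fun i _ => hdiagM i]
      simp only [Finset.sum_add_distrib, Finset.sum_const, Finset.card_univ, hn, nsmul_eq_mul,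
        ← hD]
      ring
    have hrowC : ∀ k, ∑ j, C k j = d k - β / 2 := by
      intro k
      simp only [hC, Matrix.sub_apply, Matrix.smul_apply, Matrix.one_apply, smul_eq_mul,
        Finset.sum_sub_distrib, mul_ite, mul_one, mul_zero]
      rw [Finset.sum_ite_eq univ k (fun _ => β / 2)]
      simp [hd]
    have hcolC : ∀ k, ∑ i, C i k = d k - β / 2 := by
      intro k
      have : ∀ i, C i k = C k i := by
        intro i
        simp [hC, Matrix.sub_apply, Matrix.smul_apply, Matrix.one_apply, hAsymm k i, eq_comm]
      rw [Finset.sum_congr rfl fun i _ => this i]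
      exact hrowC k
    have hMsum : ∑ i, ∑ j, M i j = β * (n:ℝ) ^ 2 + β ^ 2 / 4 * n + s - β * D := by
      have hC2sum : ∑ i, ∑ j, (C ^ 2) i j = ∑ k, (d k - β / 2) ^ 2 := by
        have e1 : ∀ i, ∑ j, (C ^ 2) i j = ∑ k, C i k * (d k - β / 2) := by
          intro i
          simp only [pow_two, Matrix.mul_apply]
          rw [Finset.sum_comm]
          exact Finset.sum_congr rfl fun k _ => by rw [← Finset.mul_sum, hrowC k]
        calc ∑ i, ∑ j, (C ^ 2) i j = ∑ i, ∑ k, C i k * (d k - β / 2) :=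
              Finset.sum_congr rfl fun i _ => e1 i
        _ = ∑ k, ∑ i, C i k * (d k - β / 2) := Finset.sum_comm
        _ = ∑ k, (d k - β / 2) * (d k - β / 2) := by
              refine Finset.sum_congr rfl fun k _ => ?_
              rw [← Finset.sum_mul, hcolC k]
        _ = ∑ k, (d k - β / 2) ^ 2 := by
              refine Finset.sum_congr rfl fun k _ => ?_
              ring
      have hexp : ∑ k, (d k - β / 2) ^ 2 = s - β * D + β ^ 2 / 4 * n := by
        rw [Finset.sum_congr rfl fun k _ => show (d k - β / 2) ^ 2
          = d k ^ 2 - β * d k + β ^ 2 / 4 from by ring]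
        simp only [Finset.sum_add_distrib, Finset.sum_sub_distrib, ← Finset.mul_sum,
          Finset.sum_const, Finset.card_univ, hn, nsmul_eq_mul, ← hD, ← hs]
        ring
      have hMapply : ∀ i j, M i j = β + (C ^ 2) i j := by
        intro i j
        simp [hM, Matrix.add_apply, Matrix.smul_apply, Matrix.of_apply]
      calc ∑ i, ∑ j, M i j = ∑ i, ∑ j, (β + (C ^ 2) i j) :=
            Finset.sum_congr rfl fun i _ => Finset.sum_congr rfl fun j _ => hMapply i j
      _ = ∑ i, ((n:ℝ) * β + ∑ j, (C ^ 2) i j) := by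
            refine Finset.sum_congr rfl fun i _ => ?_
            rw [Finset.sum_add_distrib]
            simp [Finset.card_univ, hn]
      _ = (n:ℝ) * ((n:ℝ) * β) + ∑ i, ∑ j, (C ^ 2) i j := by
            rw [Finset.sum_add_distrib]
            simp [Finset.card_univ, hn]
      _ = β * (n:ℝ) ^ 2 + β ^ 2 / 4 * n + s - β * D := by
            rw [hC2sum, hexp]
            ring
    -- assemble membership
    set T : ℝ := β * n + β ^ 2 / 4 * n + D with hTdef
    set N : ℝ := β * (n:ℝ) ^ 2 + β ^ 2 / 4 * n + s - β * D with hNdef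
    have hTne : T ≠ 0 := ne_of_gt hT
    have hBPSD : (T⁻¹ • M).PosSemidef := by
      refine Matrix.PosSemidef.of_dotProduct_mulVec_nonneg ?_ ?_
      · ext i j
        simp only [Matrix.conjTranspose_apply, Matrix.smul_apply, smul_eq_mul, star_trivial]
        rw [hMsymm i j]
      · intro x
        have h := hMPSD.dotProduct_mulVec_nonneg x
        have e : (star x) ⬝ᵥ (T⁻¹ • M) *ᵥ x = T⁻¹ * ((star x) ⬝ᵥ M *ᵥ x) := by
          rw [Matrix.smul_mulVec]
          simp [dotProduct_smul, smul_eq_mul]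
        rw [e]
        exact mul_nonneg (inv_nonneg.2 hT.le) h
    have hmem : N / T ∈ { x : ℝ | ∃ B : Matrix V V ℝ, B.PosSemidef ∧ B.trace = 1 ∧
        (∀ i j, G.Adj i j → B i j = 0) ∧ x = ∑ i, ∑ j, B i j } := by
      refine ⟨T⁻¹ • M, hBPSD, ?_, ?_, ?_⟩
      · rw [Matrix.trace_smul, htrM, smul_eq_mul, inv_mul_cancel₀ hTne]
      · intro i j hij
        simp [Matrix.smul_apply, hMedge i j hij]
      · simp only [Matrix.smul_apply, smul_eq_mul, ← Finset.mul_sum]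
        rw [hMsum, div_eq_inv_mul]
    exact le_csSup (theta_bddAbove G) hmem
  -- now the numerology
  have hrn : (1:ℝ) ≤ (n:ℝ) := by exact_mod_cast hn1
  set r : ℝ := (n:ℝ) ^ ((1:ℝ)/3) with hrdef
  have hr1 : 1 ≤ r := Real.one_le_rpow hrn (by norm_num)
  have hr0 : 0 < r := lt_of_lt_of_le one_pos hr1
  have hr3 : r ^ 3 = (n:ℝ) := by
    rw [hrdef, ← Real.rpow_natCast ((n:ℝ) ^ ((1:ℝ)/3)) 3, ← Real.rpow_mul (by positivity)]
    norm_num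
  have hgoal : (n:ℝ) ^ ((2:ℝ)/3) = r ^ 2 := by
    rw [hrdef, ← Real.rpow_natCast ((n:ℝ) ^ ((1:ℝ)/3)) 2, ← Real.rpow_mul (by positivity)]
    norm_num
  rw [hgoal]
  rcases le_or_gt (r ^ 5 / 8) D with hcase | hcase
  · -- β = 0
    have hT : (0:ℝ) < 0 * n + 0 ^ 2 / 4 * n + D := by
      have h8 : (0:ℝ) < r ^ 5 / 8 := by positivity
      simp only [zero_mul, zero_pow, ne_eq, OfNat.ofNat_ne_zero, not_false_eq_true,
        zero_div, zero_add, add_zero]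
      linarith
    have h := main 0 le_rfl hT
    have h' : s / D ≤ lovaszTheta G := by
      have e1 : (0 * (n:ℝ) ^ 2 + 0 ^ 2 / 4 * n + s - 0 * D) = s := by ring
      have e2 : (0 * (n:ℝ) + 0 ^ 2 / 4 * n + D) = D := by ring
      rwa [e1, e2] at h
    refine le_trans ?_ h'
    have hDpos : 0 < D := by
      have h8 : (0:ℝ) < r ^ 5 / 8 := by positivity
      linarith
    rw [div_le_div_iff₀ (by norm_num : (0:ℝ) < 16) hDpos]
    -- r^2 * D ≤ s * 16
    have hmul : 0 < r ^ 3 := by positivity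
    rw [← mul_le_mul_iff_of_pos_right hmul]
    have h1 : 16 * D ^ 2 ≤ 16 * (s * r ^ 3) := by
      rw [hr3]; linarith [hCS]
    have h2 : (r ^ 5 / 8) * D ≤ D * D := mul_le_mul_of_nonneg_right hcase hD0
    have h3 : 0 ≤ r ^ 5 * D := by positivity
    nlinarith [h1, h2, h3]
  · -- β = r
    have hT : (0:ℝ) < r * n + r ^ 2 / 4 * n + D := by
      have : (0:ℝ) < r * n := by positivity
      nlinarith [hD0, sq_nonneg r, hrn]
    have h := main r hr0.le hT
    refine le_trans ?_ h
    rw [div_le_div_iff₀ (by norm_num : (0:ℝ) < 16) hT]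
    rw [← hr3]
    have h1 : r ^ 2 * D ≤ r ^ 2 * (r ^ 5 / 8) :=
      mul_le_mul_of_nonneg_left hcase.le (by positivity)
    have h2 : r * D ≤ r * (r ^ 5 / 8) := mul_le_mul_of_nonneg_left hcase.le hr0.le
    have h3 : r ^ 6 ≤ r ^ 7 := by
      calc r ^ 6 = r ^ 6 * 1 := by ring
      _ ≤ r ^ 6 * r := mul_le_mul_of_nonneg_left hr1 (pow_nonneg hr0.le 6)
      _ = r ^ 7 := by ring
    nlinarith [h1, h2, h3, hs0, pow_nonneg hr0.le 5, pow_nonneg hr0.le 7]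
end

section
/- Let G be the finite simple graph whose vertices are the binary vectors in {0,1}^5, with two distinct vertices adjacent iff their Hamming distance is 1 or 2. Then θ'(G) ≤ 4 and α(G ⊠ G) ≥ 20; consequently Θ(G) ≥ √20 > θ'(G), i.e., the Schrijver θ-function of a graph is not in general an upper bound on its Shannon capacity. -/
open scoped Classical

/-- The graph on the binary vectors of length 5, two distinct vertices being adjacent
iff their Hamming distance is 1 or 2. -/
def hamGraph : SimpleGraph (Fin 5 → Bool) where
  Adj x y := hammingDist x y = 1 ∨ hammingDist x y = 2
  symm := by
    constructor
    intro x y h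
    rwa [hammingDist_comm]
  loopless := by
    constructor
    intro x h
    simp [hammingDist_self] at h

/-! ### Auxiliary material -/

instance : DecidableRel hamGraph.Adj :=
  fun x y => inferInstanceAs (Decidable (hammingDist x y = 1 ∨ hammingDist x y = 2))

instance : DecidableRel (strongProd hamGraph hamGraph).Adj :=
  fun x y => inferInstanceAs (Decidable (x ≠ y ∧
    (x.1 = y.1 ∨ hamGraph.Adj x.1 y.1) ∧ (x.2 = y.2 ∨ hamGraph.Adj x.2 y.2)))

instance : DecidableRel (strongPow hamGraph 2).Adj :=
  fun x y => inferInstanceAs (Decidable (x ≠ y ∧ ∀ i, x i = y i ∨ hamGraph.Adj (x i) (y i)))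

def sg (b : Bool) : ℤ := if b then -1 else 1
def pr (x : Fin 5 → Bool) : ℤ := ∏ i, sg (x i)
def Tm (x y : Fin 5 → Bool) : ℤ := (∑ i, sg (x i) * sg (y i)) + pr x * pr y

lemma Tm_diag : ∀ x : Fin 5 → Bool, Tm x x = 6 := by decide

lemma Tm_le : ∀ x y : Fin 5 → Bool, ¬ hamGraph.Adj x y → x ≠ y → Tm x y ≤ -2 := by decide

lemma indepNum_ge {V : Type*} [Fintype V] (G : SimpleGraph V) (s : Finset V)
    (h : ∀ i ∈ s, ∀ j ∈ s, i ≠ j → ¬ G.Adj i j) : s.card ≤ indepNum G := by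
  have hmem : ∃ t : Finset V, (∀ i ∈ t, ∀ j ∈ t, i ≠ j → ¬ G.Adj i j) ∧ t.card = s.card :=
    ⟨s, h, rfl⟩
  have hbdd : BddAbove { n : ℕ | ∃ s : Finset V,
      (∀ i ∈ s, ∀ j ∈ s, i ≠ j → ¬ G.Adj i j) ∧ s.card = n } := by
    refine ⟨Fintype.card V, ?_⟩
    rintro n ⟨t, -, ht⟩
    exact ht ▸ t.card_le_univ.trans_eq Finset.card_univ
  exact le_csSup hbdd hmem

lemma indepNum_le {V : Type*} [Fintype V] (G : SimpleGraph V) :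
    indepNum G ≤ Fintype.card V := by
  have hne : { n : ℕ | ∃ s : Finset V,
      (∀ i ∈ s, ∀ j ∈ s, i ≠ j → ¬ G.Adj i j) ∧ s.card = n }.Nonempty := by
    refine ⟨0, ∅, ?_, ?_⟩ <;> simp
  apply csSup_le hne
  rintro n ⟨t, -, ht⟩
  exact ht ▸ t.card_le_univ.trans_eq Finset.card_univ

/-- A 20-element independent set in `G ⊠ G`, as a list. -/
def L20 : List ((Fin 5 → Bool) × (Fin 5 → Bool)) :=
  [(![true,true,false,false,false], ![true,false,true,false,false]),
   (![true,false,true,false,false], ![true,false,false,true,true]),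
   (![false,true,true,false,false], ![false,true,false,true,false]),
   (![true,true,true,false,false], ![false,true,true,false,true]),
   (![true,false,false,true,false], ![false,true,true,true,false]),
   (![false,true,false,true,false], ![true,true,false,false,true]),
   (![true,true,false,true,false], ![false,false,false,true,true]),
   (![false,false,true,true,false], ![false,false,true,false,true]),
   (![true,false,true,true,false], ![true,true,false,false,false]),
   (![false,true,true,true,false], ![true,false,true,true,false]),
   (![true,false,false,false,true], ![false,true,false,false,true]),
   (![false,true,false,false,true], ![false,false,true,true,true]),
   (![true,true,false,false,true], ![true,true,false,true,false]),
   (![false,false,true,false,true], ![true,true,true,false,false]),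
   (![true,false,true,false,true], ![false,false,true,true,false]),
   (![false,true,true,false,true], ![true,false,false,false,true]),
   (![false,false,false,true,true], ![true,false,false,true,false]),
   (![true,false,false,true,true], ![true,false,true,false,true]),
   (![false,true,false,true,true], ![false,true,true,false,false]),
   (![false,false,true,true,true], ![false,true,false,true,true])]

def S20 : Finset ((Fin 5 → Bool) × (Fin 5 → Bool)) := L20.toFinset

lemma L20_nodup : L20.Nodup := by decide

lemma S20_card : S20.card = 20 := by
  rw [S20, List.toFinset_card_of_nodup L20_nodup]; rfl

lemma check20 : (L20.all fun p => L20.all fun q =>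
    decide (p ≠ q → ¬ (strongProd hamGraph hamGraph).Adj p q)) = true := by decide

lemma S20_indep :
    ∀ i ∈ S20, ∀ j ∈ S20, i ≠ j → ¬ (strongProd hamGraph hamGraph).Adj i j := by
  intro i hi j hj
  have h1 := List.all_eq_true.mp check20 i (List.mem_toFinset.mp hi)
  have h2 := List.all_eq_true.mp h1 j (List.mem_toFinset.mp hj)
  exact of_decide_eq_true h2

/-- Repackaging pairs as functions `Fin 2 → _`. -/
def pairFun (p : (Fin 5 → Bool) × (Fin 5 → Bool)) : Fin 2 → (Fin 5 → Bool) := ![p.1, p.2]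

lemma pairFun_inj : Function.Injective pairFun := by
  intro p q h
  have h0 := congrFun h 0
  have h1 := congrFun h 1
  simp only [pairFun, Matrix.cons_val_zero, Matrix.cons_val_one, Matrix.head_cons] at h0 h1
  exact Prod.ext h0 h1

def S20' : Finset (Fin 2 → (Fin 5 → Bool)) := S20.image pairFun

lemma S20'_card : S20'.card = 20 := by
  rw [S20', Finset.card_image_of_injective _ pairFun_inj, S20_card]

lemma S20'_indep :
    ∀ i ∈ S20', ∀ j ∈ S20', i ≠ j → ¬ (strongPow hamGraph 2).Adj i j := by
  intro i hi j hj hne hadj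
  obtain ⟨p, hp, rfl⟩ := Finset.mem_image.mp hi
  obtain ⟨q, hq, rfl⟩ := Finset.mem_image.mp hj
  have hpq : p ≠ q := fun h => hne (by rw [h])
  apply S20_indep p hp q hq hpq
  obtain ⟨-, hall⟩ := hadj
  have h0 := hall 0
  have h1 := hall 1
  simp only [pairFun, Matrix.cons_val_zero, Matrix.cons_val_one, Matrix.head_cons] at h0 h1
  exact ⟨hpq, h0, h1⟩

/-- Main inequality: any feasible matrix in the Schrijver program has total sum at most 4. -/
lemma sumB_le (B : Matrix (Fin 5 → Bool) (Fin 5 → Bool) ℝ) (hP : B.PosSemidef)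
    (ht : B.trace = 1) (hE : ∀ i j, hamGraph.Adj i j → B i j = 0)
    (hN : ∀ i j, 0 ≤ B i j) : ∑ i, ∑ j, B i j ≤ 4 := by
  have hq : ∀ u : (Fin 5 → Bool) → ℝ, 0 ≤ ∑ x, ∑ y, u x * B x y * u y := by
    intro u
    have h := hP.dotProduct_mulVec_nonneg u
    have e : dotProduct (star u) (B.mulVec u) = ∑ x, ∑ y, u x * B x y * u y := by
      simp [dotProduct, Matrix.mulVec, Finset.mul_sum, mul_assoc]
    rw [e] at h
    exact h
  -- positivity of the certificate part
  have hM : 0 ≤ ∑ x, ∑ y, (Tm x y : ℝ) * B x y := by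
    have e : ∑ x, ∑ y, (Tm x y : ℝ) * B x y
        = (∑ i : Fin 5, ∑ x, ∑ y,
            ((sg (x i) : ℝ)) * B x y * ((sg (y i) : ℝ)))
          + ∑ x, ∑ y, ((pr x : ℝ)) * B x y * ((pr y : ℝ)) := by
      have e1 : ∀ x y : Fin 5 → Bool, (Tm x y : ℝ) * B x y
          = (∑ i : Fin 5, (sg (x i) : ℝ) * B x y * (sg (y i) : ℝ))
            + (pr x : ℝ) * B x y * (pr y : ℝ) := by
        intro x y
        simp only [Tm]
        push_cast
        rw [add_mul, Finset.sum_mul]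
        congr 1
        · exact Finset.sum_congr rfl (fun i _ => by ring)
        · ring
      calc ∑ x, ∑ y, (Tm x y : ℝ) * B x y
          = ∑ x, ∑ y, ((∑ i : Fin 5, (sg (x i) : ℝ) * B x y * (sg (y i) : ℝ))
              + (pr x : ℝ) * B x y * (pr y : ℝ)) :=
            Finset.sum_congr rfl (fun x _ => Finset.sum_congr rfl (fun y _ => e1 x y))
        _ = (∑ x, ∑ y, ∑ i : Fin 5, (sg (x i) : ℝ) * B x y * (sg (y i) : ℝ))
              + ∑ x, ∑ y, (pr x : ℝ) * B x y * (pr y : ℝ) := by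
            rw [← Finset.sum_add_distrib]
            exact Finset.sum_congr rfl (fun x _ => by rw [← Finset.sum_add_distrib])
        _ = (∑ x, ∑ i : Fin 5, ∑ y, (sg (x i) : ℝ) * B x y * (sg (y i) : ℝ))
              + ∑ x, ∑ y, (pr x : ℝ) * B x y * (pr y : ℝ) := by
            congr 1
            exact Finset.sum_congr rfl (fun x _ => Finset.sum_comm)
        _ = _ := by
            congr 1
            exact Finset.sum_comm
    rw [e]
    refine add_nonneg (Finset.sum_nonneg fun i _ => ?_) (hq fun x => (pr x : ℝ))
    exact hq (fun x => (sg (x i) : ℝ))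
  -- pointwise nonnegativity of the slack
  have hpt : ∀ x y : Fin 5 → Bool,
      0 ≤ ((if x = y then (4:ℝ) else 0) - 1 - (Tm x y : ℝ)/2) * B x y := by
    intro x y
    by_cases hadj : hamGraph.Adj x y
    · rw [hE x y hadj, mul_zero]
    · by_cases hxy : x = y
      · subst hxy
        rw [if_pos rfl, Tm_diag x]
        norm_num
      · have h2 : Tm x y ≤ -2 := Tm_le x y hadj hxy
        have h2' : (Tm x y : ℝ) ≤ -2 := by exact_mod_cast h2
        have hc : 0 ≤ (if x = y then (4:ℝ) else 0) - 1 - (Tm x y : ℝ)/2 := by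
          rw [if_neg hxy]
          linarith
        exact mul_nonneg hc (hN x y)
  have hsl : 0 ≤ ∑ x, ∑ y,
      ((if x = y then (4:ℝ) else 0) - 1 - (Tm x y : ℝ)/2) * B x y :=
    Finset.sum_nonneg fun x _ => Finset.sum_nonneg fun y _ => hpt x y
  -- the diagonal sum
  have hdiag : ∑ x, ∑ y, (if x = y then (4:ℝ) else 0) * B x y = 4 := by
    have e : ∀ x : Fin 5 → Bool,
        ∑ y, (if x = y then (4:ℝ) else 0) * B x y = 4 * B x x := by
      intro x
      rw [Finset.sum_eq_single x]
      · rw [if_pos rfl]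
      · intro y _ hy
        rw [if_neg (Ne.symm hy), zero_mul]
      · intro h; exact absurd (Finset.mem_univ x) h
    rw [Finset.sum_congr rfl fun x _ => e x, ← Finset.mul_sum]
    have : ∑ x, B x x = 1 := by
      have := ht
      simpa [Matrix.trace, Matrix.diag] using this
    rw [this, mul_one]
  -- combine
  have key : 0 ≤ 4 - ∑ x, ∑ y, B x y := by
    have e : 4 - ∑ x, ∑ y, B x y
        = (∑ x, ∑ y, ((Tm x y : ℝ)/2) * B x y)
          + ∑ x, ∑ y, ((if x = y then (4:ℝ) else 0) - 1 - (Tm x y : ℝ)/2) * B x y := by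
      have e2 : ∀ x y : Fin 5 → Bool,
          ((Tm x y : ℝ)/2) * B x y
            + ((if x = y then (4:ℝ) else 0) - 1 - (Tm x y : ℝ)/2) * B x y
          = (if x = y then (4:ℝ) else 0) * B x y - B x y := by
        intro x y; ring
      rw [← Finset.sum_add_distrib]
      have : ∀ x : Fin 5 → Bool,
          (∑ y, ((Tm x y : ℝ)/2) * B x y)
            + ∑ y, ((if x = y then (4:ℝ) else 0) - 1 - (Tm x y : ℝ)/2) * B x y
          = ∑ y, ((if x = y then (4:ℝ) else 0) * B x y - B x y) := by
        intro x
        rw [← Finset.sum_add_distrib]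
        exact Finset.sum_congr rfl (fun y _ => e2 x y)
      rw [Finset.sum_congr rfl fun x _ => this x]
      rw [Finset.sum_congr rfl fun x _ => Finset.sum_sub_distrib (fun y => (if x = y then (4:ℝ) else 0) * B x y) (fun y => B x y),
        Finset.sum_sub_distrib, hdiag]
    rw [e]
    have hM2 : 0 ≤ ∑ x, ∑ y, ((Tm x y : ℝ)/2) * B x y := by
      have e3 : ∑ x, ∑ y, ((Tm x y : ℝ)/2) * B x y
          = (1/2) * ∑ x, ∑ y, (Tm x y : ℝ) * B x y := by
        rw [Finset.mul_sum]
        exact Finset.sum_congr rfl fun x _ => by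
          rw [Finset.mul_sum]
          exact Finset.sum_congr rfl fun y _ => by ring
      rw [e3]
      positivity
    linarith
  linarith

lemma schrijver_le_four : schrijverTheta hamGraph ≤ 4 := by
  apply Real.sSup_le
  · rintro x ⟨B, hP, ht, hE, hN, rfl⟩
    exact sumB_le B hP ht hE hN
  · norm_num

theorem stmt19 :
    schrijverTheta hamGraph ≤ 4 ∧
    20 ≤ indepNum (strongProd hamGraph hamGraph) ∧
    Real.sqrt 20 ≤ shannonCapacity hamGraph ∧
    schrijverTheta hamGraph < Real.sqrt 20 := by
  have h1 : schrijverTheta hamGraph ≤ 4 := schrijver_le_four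
  have h2 : 20 ≤ indepNum (strongProd hamGraph hamGraph) := by
    have := indepNum_ge (strongProd hamGraph hamGraph) S20 S20_indep
    rwa [S20_card] at this
  have h2' : 20 ≤ indepNum (strongPow hamGraph 2) := by
    have := indepNum_ge (strongPow hamGraph 2) S20' S20'_indep
    rwa [S20'_card] at this
  have hsqrt : (4:ℝ) < Real.sqrt 20 := by
    rw [show (4:ℝ) = Real.sqrt 16 by
      rw [show (16:ℝ) = 4^2 by norm_num, Real.sqrt_sq (by norm_num)]]
    exact Real.sqrt_lt_sqrt (by norm_num) (by norm_num)
  have h3 : Real.sqrt 20 ≤ shannonCapacity hamGraph := by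
    have hbdd : BddAbove (Set.range fun k : ℕ+ =>
        (indepNum (strongPow hamGraph (k : ℕ)) : ℝ) ^ ((1 : ℝ) / ((k : ℕ) : ℝ))) := by
      refine ⟨32, ?_⟩
      rintro x ⟨k, rfl⟩
      have hcard : Fintype.card (Fin (k : ℕ) → (Fin 5 → Bool)) = 32 ^ (k : ℕ) := by
        simp [Fintype.card_fun]
      have h1' : (indepNum (strongPow hamGraph (k : ℕ)) : ℝ) ≤ (32:ℝ) ^ (k : ℕ) := by
        have := indepNum_le (strongPow hamGraph (k : ℕ))
        rw [hcard] at this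
        exact_mod_cast this
      have hk0 : ((k : ℕ) : ℝ) ≠ 0 := by
        exact_mod_cast (Nat.pos_of_ne_zero (fun h => k.ne_zero h)).ne'
      calc (indepNum (strongPow hamGraph (k : ℕ)) : ℝ) ^ ((1 : ℝ) / ((k : ℕ) : ℝ))
          ≤ ((32:ℝ) ^ (k : ℕ)) ^ ((1 : ℝ) / ((k : ℕ) : ℝ)) :=
            Real.rpow_le_rpow (by positivity) h1' (by positivity)
        _ = 32 := by
            rw [← Real.rpow_natCast (32:ℝ) (k : ℕ), ← Real.rpow_mul (by norm_num)]
            rw [mul_one_div, div_self hk0, Real.rpow_one]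
    have hterm : Real.sqrt 20 ≤
        (indepNum (strongPow hamGraph ((2 : ℕ+) : ℕ)) : ℝ) ^ ((1 : ℝ) / (((2 : ℕ+) : ℕ) : ℝ)) := by
      have hc : ((2 : ℕ+) : ℕ) = 2 := rfl
      rw [hc]
      have h20 : (20:ℝ) ≤ (indepNum (strongPow hamGraph 2) : ℝ) := by exact_mod_cast h2'
      calc Real.sqrt 20 = (20:ℝ) ^ ((1:ℝ)/2) := by rw [Real.sqrt_eq_rpow]
        _ ≤ (indepNum (strongPow hamGraph 2) : ℝ) ^ ((1:ℝ)/2) :=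
            Real.rpow_le_rpow (by norm_num) h20 (by norm_num)
        _ = (indepNum (strongPow hamGraph 2) : ℝ) ^ ((1:ℝ)/((2:ℕ):ℝ)) := by norm_num
    exact hterm.trans (le_ciSup hbdd (2 : ℕ+))
  exact ⟨h1, h2, h3, lt_of_le_of_lt h1 hsqrt⟩
end
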